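/- arXiv:2512.10154 — 3 statements merged into one kernel-verified Lean document; each statement's English description precedes it below -/
import Mathlib

section
/- Let 𝓜 = (M,<,+,0,…) be a definably complete expansion of an ordered group and dim : Def(𝓜) → ℕ ∪ {−∞} a dimension function. Suppose there exists a definable non-closed discrete subset Z of M whose closure cl(Z) is a union of finitely many definable discrete sets. Then dim X = 0 for every nonempty definable discrete subset X of M. -/
open FirstOrder FirstOrder.Language Set

universe u v w

namespace PaperDim

section Core

variable (L : FirstOrder.Language.{v, w}) (M : Type u) [L.Structure M]

/-- The collection of definable subsets of `M^n` (definable with parameters from `M`). -/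
abbrev DefSet (n : ℕ) : Type u :=
  {X : Set (Fin n → M) // Set.Definable (Set.univ : Set M) L X}

variable {L M}

/-- A definable subset of `M^1` viewed as a subset of `M`. -/
def asSet1 (X : Set (Fin 1 → M)) : Set M := {a : M | (fun _ => a) ∈ X}

/-- The fiber of `X ⊆ M^{n+1}` over `x ∈ M^n`, as a subset of `M^1`. -/
def fiber {n : ℕ} (X : Set (Fin (n + 1) → M)) (x : Fin n → M) : Set (Fin 1 → M) :=
  {y | Fin.snoc x (y 0) ∈ X}

/-- Condition (1) of a dimension function: `dim ∅ = -∞`, `dim {a} = 0`, `dim M = 1`.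
Here `d k` is the value of the dimension function on definable subsets of `M^{k+1}`. -/
def Cond1 (d : ∀ n : ℕ, DefSet L M (n + 1) → WithBot ℕ) : Prop :=
  (∀ X : DefSet L M 1, X.1 = ∅ → d 0 X = ⊥) ∧
  (∀ (X : DefSet L M 1) (a : M), X.1 = ({fun _ => a} : Set (Fin 1 → M)) → d 0 X = 0) ∧
  (∀ X : DefSet L M 1, X.1 = (Set.univ : Set (Fin 1 → M)) → d 0 X = 1)

/-- Condition (2)ₙ (at arity `n + 1`): `dim (X ∪ Y) = max (dim X) (dim Y)`. -/
def Cond2 (d : ∀ n : ℕ, DefSet L M (n + 1) → WithBot ℕ) (n : ℕ) : Prop :=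
  ∀ X Y Z : DefSet L M (n + 1), Z.1 = X.1 ∪ Y.1 → d n Z = max (d n X) (d n Y)

/-- Condition (3)ₙ (at arity `n + 1`): invariance under coordinate permutations. -/
def Cond3 (d : ∀ n : ℕ, DefSet L M (n + 1) → WithBot ℕ) (n : ℕ) : Prop :=
  ∀ (σ : Equiv.Perm (Fin (n + 1))) (X Y : DefSet L M (n + 1)),
    Y.1 = {y : Fin (n + 1) → M | y ∘ σ ∈ X.1} → d n Y = d n X

/-- Condition (3'): invariance under switching the two coordinates, at arity 2. -/
def Cond3' (d : ∀ n : ℕ, DefSet L M (n + 1) → WithBot ℕ) : Prop :=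
  ∀ X Y : DefSet L M 2, Y.1 = {v : Fin 2 → M | ![v 1, v 0] ∈ X.1} → d 1 Y = d 1 X

/-- Condition (4)ₙ, the addition property (at arity `n + 2`):
the set `X(i)` of points over which the fiber of `X` has dimension `i` is definable, and
`dim (X ∩ Π⁻¹(X(i))) = dim X(i) + i`. -/
def Cond4 (d : ∀ n : ℕ, DefSet L M (n + 1) → WithBot ℕ) (n : ℕ) : Prop :=
  ∀ (X : DefSet L M (n + 2)) (i : Fin 2),
    ∃ (Xi : DefSet L M (n + 1)) (W : DefSet L M (n + 2)),
      Xi.1 = {x : Fin (n + 1) → M |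
        ∃ hf : Set.Definable (Set.univ : Set M) L (fiber X.1 x),
          d 0 ⟨fiber X.1 x, hf⟩ = ((i : ℕ) : WithBot ℕ)} ∧
      W.1 = X.1 ∩ (fun z : Fin (n + 2) → M => z ∘ Fin.castSucc) ⁻¹' Xi.1 ∧
      d (n + 1) W = d n Xi + ((i : ℕ) : WithBot ℕ)

/-- A dimension function on the structure `M` (van den Dries). -/
def IsDimFun (d : ∀ n : ℕ, DefSet L M (n + 1) → WithBot ℕ) : Prop :=
  Cond1 d ∧ (∀ n, Cond2 d n) ∧ (∀ n, Cond3 d n) ∧ (∀ n, Cond4 d n)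

/-- A weak dimension function: conditions (1), (2)₁, (3') and (4)ₙ for all `n > 1`. -/
def IsWeakDimFun (d : ∀ n : ℕ, DefSet L M (n + 1) → WithBot ℕ) : Prop :=
  Cond1 d ∧ Cond2 d 0 ∧ Cond3' d ∧ (∀ n, Cond4 d n)

variable (L M)

/-- The set `DIM(M)` of dimension functions on `M`. -/
def DimFuns : Set (∀ n : ℕ, DefSet L M (n + 1) → WithBot ℕ) := {d | IsDimFun d}

/-- `𝔫_dim(M)`: the cardinality of the set of dimension functions on `M`. -/
noncomputable def nDim : Cardinal := Cardinal.mk (DimFuns L M)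

/-- The order `<` is definable in the structure. -/
def LtDefinable [LT M] : Prop :=
  Set.Definable (Set.univ : Set M) L {v : Fin 2 → M | v 0 < v 1}

/-- The graph of addition is definable in the structure. -/
def AddDefinable [Add M] : Prop :=
  Set.Definable (Set.univ : Set M) L {v : Fin 3 → M | v 0 + v 1 = v 2}

/-- The graph of multiplication is definable in the structure. -/
def MulDefinable [Mul M] : Prop :=
  Set.Definable (Set.univ : Set M) L {v : Fin 3 → M | v 0 * v 1 = v 2}

end Core

/-- The order topology on a linear order, generated by open rays. -/
def orderTop (α : Type*) [LinearOrder α] : TopologicalSpace α :=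
  TopologicalSpace.generateFrom {s : Set α | (∃ a, s = Set.Ioi a) ∨ (∃ a, s = Set.Iio a)}

/-- A set is discrete (w.r.t. a topology `t`) if all of its points are isolated in it. -/
def DiscreteIn {α : Type*} (t : TopologicalSpace α) (D : Set α) : Prop :=
  ∀ x ∈ D, ∃ U : Set α, t.IsOpen U ∧ U ∩ D = {x}

/-- An open interval: a nonempty set of the form `(a, b)` with `a, b ∈ M ∪ {±∞}`. -/
def IsOpenInterval {α : Type*} [Preorder α] (S : Set α) : Prop :=
  S.Nonempty ∧ ((∃ a b, S = Set.Ioo a b) ∨ (∃ a, S = Set.Ioi a) ∨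
    (∃ b, S = Set.Iio b) ∨ S = Set.univ)

section Ord

variable (L : FirstOrder.Language.{v, w}) (M : Type u) [L.Structure M]

/-- O-minimality: every definable subset of `M` is a union of a finite set and finitely many
open intervals. -/
def OMinimal [LinearOrder M] : Prop :=
  ∀ X : DefSet L M 1, ∃ (F : Set M) (k : ℕ) (C : Fin k → Set M),
    F.Finite ∧ (∀ i, IsOpenInterval (C i)) ∧ asSet1 X.1 = F ∪ ⋃ i, C i

/-- Weak o-minimality: every definable subset of `M` is a union of finitely many convex sets. -/
def WeaklyOMinimal [LinearOrder M] : Prop :=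
  ∀ X : DefSet L M 1, ∃ (k : ℕ) (C : Fin k → Set M),
    (∀ i, (C i).OrdConnected) ∧ asSet1 X.1 = ⋃ i, C i

/-- Definable completeness: every definable subset of `M` has a supremum and an infimum in
`M ∪ {±∞}`. -/
def DefinablyComplete [LinearOrder M] : Prop :=
  ∀ X : DefSet L M 1,
    ((asSet1 X.1).Nonempty → BddAbove (asSet1 X.1) → ∃ a, IsLUB (asSet1 X.1) a) ∧
    ((asSet1 X.1).Nonempty → BddBelow (asSet1 X.1) → ∃ a, IsGLB (asSet1 X.1) a)

/-- d-minimality: the structure is definably complete and in every elementarily equivalent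
structure, every definable subset of the universe is a union of an open set and finitely many
discrete sets. The linear order is assumed to be the interpretation of the relation symbol `lt`. -/
def DMinimal [LinearOrder M] (lt : L.Relations 2) : Prop :=
  DefinablyComplete L M ∧
  ∀ (N : Type u) [L.Structure N] [LinearOrder N],
    (∀ a b : N, Structure.RelMap lt ![a, b] ↔ a < b) →
    L.ElementarilyEquivalent M N →
    ∀ X : DefSet L N 1,
      ∃ (U : Set N) (k : ℕ) (D : Fin k → Set N),
        (orderTop N).IsOpen U ∧ (∀ i, DiscreteIn (orderTop N) (D i)) ∧
        asSet1 X.1 = U ∪ ⋃ i, D i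

end Ord

open scoped Classical in
/-- The topological dimension of a definable set: the largest `d` such that the image of the
set under some coordinate projection `M^n → M^d` has nonempty interior (w.r.t. the order
topology and the corresponding product topologies). -/
noncomputable def dimTop {M : Type u} [LinearOrder M] {n : ℕ} (X : Set (Fin n → M)) :
    WithBot ℕ :=
  if X = ∅ then ⊥
  else
    ↑(sSup {d : ℕ | ∃ f : Fin d → Fin n, Function.Injective f ∧
      (@interior (Fin d → M) (@Pi.topologicalSpace (Fin d) (fun _ => M) (fun _ => orderTop M))
        ((fun x : Fin n → M => x ∘ f) '' X)).Nonempty})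


/-! ### Extra notions -/

/-- `G ⊆ M²` is the graph of a bijection from `A` onto `B`. -/
def IsDefBijectionGraph {M : Type u} (G : Set (Fin 2 → M)) (A B : Set M) : Prop :=
  (∀ v ∈ G, v 0 ∈ A ∧ v 1 ∈ B) ∧
  (∀ x ∈ A, ∃! y : M, (![x, y] : Fin 2 → M) ∈ G) ∧
  (∀ y ∈ B, ∃! x : M, (![x, y] : Fin 2 → M) ∈ G)

section Extra

variable (L : FirstOrder.Language.{v, w}) (M : Type u) [L.Structure M]

/-- A definable set `I ⊆ M` is self-sufficient if it is infinite and there is no definable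
bijection between an infinite definable subset of `I` and an infinite definable subset of
`M ∖ I`. -/
def SelfSufficient (I : Set M) : Prop :=
  I.Infinite ∧
  ∀ J₁ J₂ : DefSet L M 1, asSet1 J₁.1 ⊆ I → asSet1 J₂.1 ⊆ Iᶜ →
    (asSet1 J₁.1).Infinite → (asSet1 J₂.1).Infinite →
    ¬ ∃ G : DefSet L M 2, IsDefBijectionGraph G.1 (asSet1 J₁.1) (asSet1 J₂.1)

/-- A self-sufficient set is minimally self-sufficient if every self-sufficient set either
meets it in a finite set or contains it up to a finite set. -/
def MinimallySelfSufficient (I : Set M) : Prop :=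
  SelfSufficient L M I ∧
  ∀ X : DefSet L M 1, SelfSufficient L M (asSet1 X.1) →
    (I ∩ asSet1 X.1).Finite ∨ ∃ F : Set M, F.Finite ∧ I ⊆ asSet1 X.1 ∪ F

end Extra

/-- `I₁ ∼_fin I₂`: the symmetric difference is finite. -/
def FinSymmDiff {M : Type u} (A B : Set M) : Prop := ((A \ B) ∪ (B \ A)).Finite

/-- `I⟨τ⟩`: the product of copies of `I` (where `τ i = false`) and `M ∖ I`
(where `τ i = true`). -/
def Itau {M : Type u} (I : Set M) {n : ℕ} (τ : Fin n → Bool) : Set (Fin n → M) :=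
  {v | ∀ i, if τ i then v i ∉ I else v i ∈ I}

open scoped Classical in
/-- The value of `Dim[I]` on a (nonempty) definable set contained in `I⟨τ⟩`. -/
noncomputable def DimIPiece {M : Type u} [LinearOrder M] (I : Set M) :
    (n : ℕ) → (Fin (n + 1) → Bool) → Set (Fin (n + 1) → M) → WithBot ℕ
  | 0, τ, X =>
    if X = ∅ then ⊥ else if τ 0 then 0 else dimTop X
  | n + 1, τ, X =>
    if X = ∅ then ⊥
    else if τ (Fin.last (n + 1)) then
      DimIPiece I n (fun i => τ i.castSucc)
        ((fun v : Fin (n + 2) → M => v ∘ Fin.castSucc) '' X)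
    else
      max (dimTop {x : Fin (n + 1) → M |
              (∃ v ∈ X, v ∘ Fin.castSucc = x) ∧ dimTop (fiber X x) ≠ 1})
        (dimTop {x : Fin (n + 1) → M | dimTop (fiber X x) = 1} + 1)

/-- The function `Dim[I]` associated with a subset `I` of `M` (the input dimension being the
topological dimension). -/
noncomputable def DimI {M : Type u} [LinearOrder M] (I : Set M) (n : ℕ)
    (X : Set (Fin (n + 1) → M)) : WithBot ℕ :=
  Finset.univ.sup fun τ : Fin (n + 1) → Bool => DimIPiece I n τ (X ∩ Itau I τ)

section Morley

variable (L : FirstOrder.Language.{v, w}) (M : Type u) [L.Structure M]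

/-- The model-theoretic algebraic closure of a set of parameters `A`. -/
def aclS (A : Set M) : Set M :=
  {a : M | ∃ s : Set (Fin 1 → M), Set.Definable A L s ∧ s.Finite ∧ (fun _ => a) ∈ s}

open scoped Classical in
/-- The rank `rk^acl(X/A)`: the largest cardinality of a subset of the coordinates of a point
of `X` that is `acl`-independent over `A` (and `-∞` for `X = ∅`). -/
noncomputable def rkOver {n : ℕ} (A : Set M) (X : Set (Fin n → M)) : WithBot ℕ :=
  if X = ∅ then ⊥
  else
    ↑(sSup {k : ℕ | ∃ x ∈ X, ∃ S : Finset (Fin n), S.card = k ∧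
        ∀ i ∈ S, x i ∉ aclS L M (A ∪ x '' {j : Fin n | j ∈ S ∧ j ≠ i})})

/-- A structure is minimal if every definable subset of the universe is finite or cofinite. -/
def MinimalStr : Prop :=
  ∀ X : DefSet L M 1, (asSet1 X.1).Finite ∨ ((asSet1 X.1)ᶜ : Set M).Finite

/-- A structure is strongly minimal if every elementarily equivalent structure is minimal. -/
def StronglyMinimal : Prop :=
  MinimalStr L M ∧
  ∀ (N : Type u) [L.Structure N], L.ElementarilyEquivalent M N → MinimalStr L N

end Morley

section Theories

/-- A divisible Abelian group structure on a subset `S`, with addition `f`. -/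
def DivAbGroupOn {α : Type*} (f : α → α → α) (S : Set α) : Prop :=
  (∀ x ∈ S, ∀ y ∈ S, f x y ∈ S) ∧
  (∀ x ∈ S, ∀ y ∈ S, f x y = f y x) ∧
  (∀ x ∈ S, ∀ y ∈ S, ∀ z ∈ S, f (f x y) z = f x (f y z)) ∧
  (∃ e ∈ S, (∀ x ∈ S, f e x = x) ∧ (∀ x ∈ S, ∃ y ∈ S, f x y = e)) ∧
  (∀ k : ℕ, 0 < k → ∀ x ∈ S, ∃ y ∈ S, (f y)^[k - 1] y = x)

/-- Embedding of `M` into `M ∪ {±∞}`. -/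
def emb {α : Type*} (x : α) : WithBot (WithTop α) := ((x : WithTop α) : WithBot (WithTop α))

/-- `M` is a model of the theory `T_m` of Proposition 3.17: a DLO with constants
`c_1 < ⋯ < c_{m-1}` (recorded here by the boundary sequence
`⊥ = c 0 < c 1 < ⋯ < c m = ⊤` in `M ∪ {±∞}`), such that `+` restricts to a divisible Abelian
group on each interval `(c_{i-1}, c_i)` and is constantly `c_1` off the union of the
`(c_{i-1}, c_i)²`. -/
def ModelTm (m : ℕ) (hm : 0 < m) (L : FirstOrder.Language.{v, w}) (M : Type u)
    [L.Structure M] [LinearOrder M]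
    (lt : L.Relations 2) (plus : L.Functions 2)
    (c : Fin (m + 1) → WithBot (WithTop M)) : Prop :=
  DenselyOrdered M ∧ NoMinOrder M ∧ NoMaxOrder M ∧ Nonempty M ∧
  (∀ x y : M, Structure.RelMap lt ![x, y] ↔ x < y) ∧
  c 0 = ⊥ ∧ c (Fin.last m) = ⊤ ∧ StrictMono c ∧
  (∀ i : Fin (m + 1), i ≠ 0 → i ≠ Fin.last m → ∃ x : M, c i = emb x) ∧
  (∀ i : Fin m,
    DivAbGroupOn (fun x y : M => Structure.funMap plus ![x, y])
      {x : M | c i.castSucc < emb x ∧ emb x < c i.succ}) ∧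
  (∀ x y : M,
    (¬ ∃ i : Fin m, (c i.castSucc < emb x ∧ emb x < c i.succ) ∧
        (c i.castSucc < emb y ∧ emb y < c i.succ)) →
    ∀ z : M, c ⟨1, by omega⟩ = emb z → Structure.funMap plus ![x, y] = z)

/-- The set of realizations of a unary predicate. -/
def relSet (L : FirstOrder.Language.{v, w}) (M : Type u) [L.Structure M]
    (r : L.Relations 1) : Set M :=
  {x : M | Structure.RelMap r ![x]}

/-- `M` is a model of the theory `T_m` of Theorem 3.18: an ordered divisible Abelian group
with a strictly increasing chain of nontrivial proper convex subgroups `U_1 ⊊ ⋯ ⊊ U_m ⊊ M`. -/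
def ModelTw (m : ℕ) (L : FirstOrder.Language.{v, w}) (M : Type u)
    [L.Structure M] [AddCommGroup M] [LinearOrder M] [IsOrderedAddMonoid M]
    (lt : L.Relations 2) (plus : L.Functions 2) (U : Fin m → L.Relations 1) : Prop :=
  (∀ x y : M, Structure.RelMap lt ![x, y] ↔ x < y) ∧
  (∀ x y : M, Structure.funMap plus ![x, y] = x + y) ∧
  (∀ k : ℕ, 0 < k → ∀ x : M, ∃ y : M, k • y = x) ∧
  (∀ i : Fin m,
    (0 : M) ∈ relSet L M (U i) ∧
    (∀ x ∈ relSet L M (U i), ∀ y ∈ relSet L M (U i), x + y ∈ relSet L M (U i)) ∧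
    (∀ x ∈ relSet L M (U i), -x ∈ relSet L M (U i)) ∧
    (relSet L M (U i)).OrdConnected ∧
    relSet L M (U i) ≠ {0} ∧ relSet L M (U i) ≠ Set.univ) ∧
  (∀ i j : Fin m, i < j → relSet L M (U i) ⊂ relSet L M (U j))

end Theories


section Aux14

open FirstOrder FirstOrder.Language Set

variable {L : FirstOrder.Language.{v, w}} {M : Type u} [L.Structure M]

private lemma aux14_eta1 (x : Fin 1 → M) : (fun _ : Fin 1 => x 0) = x :=
  funext fun i => by rw [Fin.eq_zero i]

private lemma aux14_ext1 {x y : Fin 1 → M} (h : x 0 = y 0) : x = y :=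
  funext fun i => by rw [Fin.eq_zero i]; exact h

private lemma aux14_funext2 {f g : Fin 2 → M} (h0 : f 0 = g 0) (h1 : f 1 = g 1) : f = g :=
  funext fun i => by fin_cases i <;> assumption

private lemma aux14_snoc_zero (x : Fin 1 → M) (a : M) :
    (Fin.snoc x a : Fin 2 → M) 0 = x 0 := by
  have h : (0 : Fin 2) = Fin.castSucc (0 : Fin 1) := rfl
  rw [h, Fin.snoc_castSucc]

private lemma aux14_snoc_one (x : Fin 1 → M) (a : M) :
    (Fin.snoc x a : Fin 2 → M) 1 = a := by
  have h : (1 : Fin 2) = Fin.last 1 := rfl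
  rw [h, Fin.snoc_last]

private lemma aux14_mem_fiber {S : Set (Fin 2 → M)} {x y : Fin 1 → M} :
    y ∈ fiber S x ↔ Fin.snoc x (y 0) ∈ S := Iff.rfl

private lemma aux14_mem_fiber_pred {P : M → M → Prop} {x y : Fin 1 → M} :
    y ∈ fiber {v : Fin 2 → M | P (v 0) (v 1)} x ↔ P (x 0) (y 0) := by
  rw [aux14_mem_fiber, Set.mem_setOf_eq, aux14_snoc_zero, aux14_snoc_one]

private lemma aux14_snoc_swap (y x : Fin 1 → M) :
    Fin.snoc y (x 0) ∘ (Equiv.swap (0 : Fin 2) 1) = Fin.snoc x (y 0) := by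
  refine aux14_funext2 ?_ ?_
  · show (Fin.snoc y (x 0) : Fin 2 → M) (Equiv.swap (0 : Fin 2) 1 0)
        = (Fin.snoc x (y 0) : Fin 2 → M) 0
    rw [Equiv.swap_apply_left, aux14_snoc_one, aux14_snoc_zero]
  · show (Fin.snoc y (x 0) : Fin 2 → M) (Equiv.swap (0 : Fin 2) 1 1)
        = (Fin.snoc x (y 0) : Fin 2 → M) 1
    rw [Equiv.swap_apply_right, aux14_snoc_zero, aux14_snoc_one]

private lemma aux14_mem_fiber_transp {S : Set (Fin 2 → M)} {y x : Fin 1 → M} :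
    x ∈ fiber {v : Fin 2 → M | v ∘ (Equiv.swap (0 : Fin 2) 1) ∈ S} y ↔ y ∈ fiber S x := by
  rw [aux14_mem_fiber, Set.mem_setOf_eq, aux14_snoc_swap, aux14_mem_fiber]

private lemma aux14_snoc_proj (v : Fin 2 → M) :
    Fin.snoc (v ∘ Fin.castSucc) (v 1) = v := by
  refine aux14_funext2 ?_ ?_
  · rw [aux14_snoc_zero]; rfl
  · rw [aux14_snoc_one]

/-- Substitution closure of definability. -/
private lemma aux14_defSubst {n m : ℕ} (ρ : Fin n → Fin m ⊕ M) {S : Set (Fin n → M)}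
    (hS : Set.Definable (Set.univ : Set M) L S) :
    Set.Definable (Set.univ : Set M) L
      {v : Fin m → M | (fun i => Sum.elim v id (ρ i)) ∈ S} := by
  obtain ⟨φ, rfl⟩ := hS
  refine ⟨φ.subst (fun i => Sum.elim (fun j => Term.var j)
    (fun c => (L.con (⟨c, Set.mem_univ c⟩ : (Set.univ : Set M))).term) (ρ i)), ?_⟩
  ext v
  simp only [Set.mem_setOf_eq, Formula.Realize, BoundedFormula.realize_subst]
  have he : (fun i => Term.realize v (Sum.elim (fun j => Term.var j)
      (fun c => (L.con (⟨c, Set.mem_univ c⟩ : (Set.univ : Set M))).term) (ρ i)))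
      = fun i => Sum.elim v id (ρ i) := by
    funext i
    rcases ρ i with j | c <;> simp [Term.realize_con]
  rw [he]

private lemma aux14_defSub1 {m : ℕ} {S : Set (Fin 1 → M)}
    (hS : Set.Definable (Set.univ : Set M) L S) (t : Fin m ⊕ M) :
    Set.Definable (Set.univ : Set M) L
      {v : Fin m → M | (fun _ : Fin 1 => Sum.elim v id t) ∈ S} := by
  have h := aux14_defSubst ![t] hS
  have e : {v : Fin m → M | (fun i : Fin 1 => Sum.elim v id (![t] i)) ∈ S}
      = {v : Fin m → M | (fun _ : Fin 1 => Sum.elim v id t) ∈ S} := by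
    ext v
    have hf : (fun i : Fin 1 => Sum.elim v id (![t] i))
        = fun _ : Fin 1 => Sum.elim v id t := by
      funext i; rw [Fin.eq_zero i]; rfl
    rw [Set.mem_setOf_eq, Set.mem_setOf_eq, hf]
  rwa [e] at h

private lemma aux14_defSub2 {m : ℕ} {S : Set (Fin 2 → M)}
    (hS : Set.Definable (Set.univ : Set M) L S) (t u : Fin m ⊕ M) :
    Set.Definable (Set.univ : Set M) L
      {v : Fin m → M | ![Sum.elim v id t, Sum.elim v id u] ∈ S} := by
  have h := aux14_defSubst ![t, u] hS
  have e : {v : Fin m → M | (fun i : Fin 2 => Sum.elim v id (![t, u] i)) ∈ S}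
      = {v : Fin m → M | ![Sum.elim v id t, Sum.elim v id u] ∈ S} := by
    ext v
    have hf : (fun i : Fin 2 => Sum.elim v id (![t, u] i))
        = ![Sum.elim v id t, Sum.elim v id u] := by
      funext i; fin_cases i <;> rfl
    rw [Set.mem_setOf_eq, Set.mem_setOf_eq, hf]
  rwa [e] at h

private lemma aux14_defSub3 {m : ℕ} {S : Set (Fin 3 → M)}
    (hS : Set.Definable (Set.univ : Set M) L S) (t u w : Fin m ⊕ M) :
    Set.Definable (Set.univ : Set M) L
      {v : Fin m → M | ![Sum.elim v id t, Sum.elim v id u, Sum.elim v id w] ∈ S} := by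
  have h := aux14_defSubst ![t, u, w] hS
  have e : {v : Fin m → M | (fun i : Fin 3 => Sum.elim v id (![t, u, w] i)) ∈ S}
      = {v : Fin m → M | ![Sum.elim v id t, Sum.elim v id u, Sum.elim v id w] ∈ S} := by
    ext v
    have hf : (fun i : Fin 3 => Sum.elim v id (![t, u, w] i))
        = ![Sum.elim v id t, Sum.elim v id u, Sum.elim v id w] := by
      funext i; fin_cases i <;> rfl
    rw [Set.mem_setOf_eq, Set.mem_setOf_eq, hf]
  rwa [e] at h

private lemma aux14_defSingle (a : M) :
    Set.Definable (Set.univ : Set M) L ({fun _ => a} : Set (Fin 1 → M)) := by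
  refine ⟨Term.equal (Term.var (0 : Fin 1))
    ((L.con (⟨a, Set.mem_univ a⟩ : (Set.univ : Set M))).term), ?_⟩
  ext y
  simp only [Set.mem_singleton_iff, Set.mem_setOf_eq, Formula.realize_equal,
    Term.realize_var, Term.realize_con]
  constructor
  · rintro rfl; rfl
  · intro h; exact aux14_ext1 h

private lemma aux14_fiberDef {S : Set (Fin 2 → M)}
    (hS : Set.Definable (Set.univ : Set M) L S) (x : Fin 1 → M) :
    Set.Definable (Set.univ : Set M) L (fiber S x) := by
  have h := aux14_defSubst ![Sum.inr (x 0), Sum.inl (0 : Fin 1)] hS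
  have e : {y : Fin 1 → M |
      (fun i : Fin 2 => Sum.elim y id (![Sum.inr (x 0), Sum.inl (0 : Fin 1)] i)) ∈ S}
      = fiber S x := by
    ext y
    have hf : (fun i : Fin 2 => Sum.elim y id (![Sum.inr (x 0), Sum.inl (0 : Fin 1)] i))
        = Fin.snoc x (y 0) := by
      refine aux14_funext2 ?_ ?_
      · rw [aux14_snoc_zero]; rfl
      · rw [aux14_snoc_one]; rfl
    rw [Set.mem_setOf_eq, aux14_mem_fiber, hf]
  rwa [e] at h

variable {d : ∀ n : ℕ, DefSet L M (n + 1) → WithBot ℕ}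

private lemma aux14_dcongr {n : ℕ} {X Y : DefSet L M (n + 1)} (h : X.1 = Y.1) :
    d n X = d n Y := congrArg (d n) (Subtype.ext h)

private lemma aux14_dempty (hd : IsDimFun d) {X : DefSet L M 1} (h : X.1 = ∅) :
    d 0 X = ⊥ := hd.1.1 X h

private lemma aux14_dsingle (hd : IsDimFun d) {X : DefSet L M 1} {a : M}
    (h : X.1 = {fun _ => a}) : d 0 X = 0 := hd.1.2.1 X a h

private lemma aux14_duniv (hd : IsDimFun d) {X : DefSet L M 1}
    (h : X.1 = (Set.univ : Set (Fin 1 → M))) : d 0 X = 1 := hd.1.2.2 X h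

private lemma aux14_dunion (hd : IsDimFun d) {n : ℕ} {X Y Z : DefSet L M (n + 1)}
    (h : Z.1 = X.1 ∪ Y.1) : d n Z = max (d n X) (d n Y) := hd.2.1 n X Y Z h

private lemma aux14_dmono (hd : IsDimFun d) {n : ℕ} {X Y : DefSet L M (n + 1)}
    (h : X.1 ⊆ Y.1) : d n X ≤ d n Y := by
  have hu := aux14_dunion (d := d) hd (X := X) (Y := Y) (Z := Y)
    (Set.union_eq_self_of_subset_left h).symm
  rw [hu]; exact le_max_left _ _

private lemma aux14_dnonneg (hd : IsDimFun d) {X : DefSet L M 1} (h : X.1.Nonempty) :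
    0 ≤ d 0 X := by
  obtain ⟨w, hw⟩ := h
  have hs : Set.Definable (Set.univ : Set M) L ({w} : Set (Fin 1 → M)) := by
    have h' := aux14_defSingle (L := L) (w 0)
    rwa [aux14_eta1 w] at h'
  have h0 : d 0 ⟨({w} : Set (Fin 1 → M)), hs⟩ = 0 :=
    aux14_dsingle hd (a := w 0) (by rw [aux14_eta1 w])
  calc (0 : WithBot ℕ) = d 0 ⟨({w} : Set (Fin 1 → M)), hs⟩ := h0.symm
    _ ≤ d 0 X := aux14_dmono hd (Set.singleton_subset_iff.mpr hw)

private lemma aux14_dle1 (hd : IsDimFun d) (X : DefSet L M 1) : d 0 X ≤ 1 := by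
  have hu := aux14_dunion (d := d) hd (X := X) (Y := ⟨X.1ᶜ, X.2.compl⟩)
    (Z := ⟨Set.univ, Set.definable_univ⟩) (by simp)
  have h1 : d 0 (⟨Set.univ, Set.definable_univ⟩ : DefSet L M 1) = 1 := aux14_duniv hd rfl
  rw [h1] at hu
  rw [hu]
  exact le_max_left _ _

private lemma aux14_d01 (hd : IsDimFun d) {X : DefSet L M 1} (h : X.1.Nonempty) :
    d 0 X = 0 ∨ d 0 X = 1 := by
  have h0 := aux14_dnonneg hd h
  have h1 := aux14_dle1 hd X
  rcases hv : d 0 X with _ | n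
  · exfalso
    rw [hv] at h0
    exact absurd h0 (WithBot.not_coe_le_bot (0 : ℕ))
  · rw [hv] at h1
    have h1' : ((n : ℕ) : WithBot ℕ) ≤ ((1 : ℕ) : WithBot ℕ) := h1
    have hn : n ≤ 1 := WithBot.coe_le_coe.mp h1'
    have hn' : n = 0 ∨ n = 1 := by omega
    rcases hn' with rfl | rfl
    · left; rfl
    · right; rfl

private lemma aux14_FIB (hd : IsDimFun d) (S : DefSet L M 2) :
    ∃ X0 X1 : DefSet L M 1,
      (∀ x, (x ∈ X0.1 ↔ d 0 ⟨fiber S.1 x, aux14_fiberDef S.2 x⟩ = 0)) ∧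
      (∀ x, (x ∈ X1.1 ↔ d 0 ⟨fiber S.1 x, aux14_fiberDef S.2 x⟩ = 1)) ∧
      d 1 S = max (d 0 X0) (d 0 X1 + 1) := by
  obtain ⟨X0, W0, hX0, hW0, hd0⟩ := hd.2.2.2 0 S 0
  obtain ⟨X1, W1, hX1, hW1, hd1⟩ := hd.2.2.2 0 S 1
  have hc0 : (((0 : Fin 2) : ℕ) : WithBot ℕ) = 0 := by norm_num
  have hc1 : (((1 : Fin 2) : ℕ) : WithBot ℕ) = 1 := by norm_num
  have hmem0 : ∀ x, x ∈ X0.1 ↔ d 0 ⟨fiber S.1 x, aux14_fiberDef S.2 x⟩ = 0 := by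
    intro x
    rw [hX0]; simp only [Set.mem_setOf_eq]
    constructor
    · rintro ⟨hf, h⟩
      rw [show (⟨fiber S.1 x, aux14_fiberDef S.2 x⟩ : DefSet L M 1)
          = ⟨fiber S.1 x, hf⟩ from Subtype.ext rfl]
      rw [h, hc0]
    · intro h
      exact ⟨aux14_fiberDef S.2 x, by rw [hc0]; exact h⟩
  have hmem1 : ∀ x, x ∈ X1.1 ↔ d 0 ⟨fiber S.1 x, aux14_fiberDef S.2 x⟩ = 1 := by
    intro x
    rw [hX1]; simp only [Set.mem_setOf_eq]
    constructor
    · rintro ⟨hf, h⟩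
      rw [show (⟨fiber S.1 x, aux14_fiberDef S.2 x⟩ : DefSet L M 1)
          = ⟨fiber S.1 x, hf⟩ from Subtype.ext rfl]
      rw [h, hc1]
    · intro h
      exact ⟨aux14_fiberDef S.2 x, by rw [hc1]; exact h⟩
  refine ⟨X0, X1, hmem0, hmem1, ?_⟩
  have hcover : S.1 = W0.1 ∪ W1.1 := by
    rw [hW0, hW1]
    ext v
    simp only [Set.mem_union, Set.mem_inter_iff, Set.mem_preimage]
    constructor
    · intro hv
      have hfib_ne : (fiber S.1 (v ∘ Fin.castSucc)).Nonempty := by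
        refine ⟨fun _ => v 1, ?_⟩
        rw [aux14_mem_fiber]
        show Fin.snoc (v ∘ Fin.castSucc) (v 1) ∈ S.1
        rw [aux14_snoc_proj]; exact hv
      rcases aux14_d01 hd (X := ⟨fiber S.1 (v ∘ Fin.castSucc),
          aux14_fiberDef S.2 (v ∘ Fin.castSucc)⟩) hfib_ne with h | h
      · exact Or.inl ⟨hv, (hmem0 _).mpr h⟩
      · exact Or.inr ⟨hv, (hmem1 _).mpr h⟩
    · rintro (⟨h, _⟩ | ⟨h, _⟩) <;> exact h
  have hu := aux14_dunion (d := d) hd (X := W0) (Y := W1) (Z := S) hcover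
  rw [hu, hd0, hd1, hc0, hc1, add_zero]

private lemma aux14_rows0 (hd : IsDimFun d) (S : DefSet L M 2)
    (h : ∀ x, (fiber S.1 x).Nonempty → d 0 ⟨fiber S.1 x, aux14_fiberDef S.2 x⟩ = 0) :
    ∃ X0 : DefSet L M 1, X0.1 = {x | (fiber S.1 x).Nonempty} ∧ d 1 S = d 0 X0 := by
  obtain ⟨X0, X1, hm0, hm1, heq⟩ := aux14_FIB hd S
  have hX1e : X1.1 = ∅ := by
    ext x
    simp only [Set.mem_empty_iff_false, iff_false]
    intro hx
    have h1 := (hm1 x).mp hx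
    rcases Set.eq_empty_or_nonempty (fiber S.1 x) with he | hne
    · rw [aux14_dempty hd (X := ⟨_, aux14_fiberDef S.2 x⟩) he] at h1
      simp at h1
    · rw [h x hne] at h1
      simp at h1
  have hX0e : X0.1 = {x | (fiber S.1 x).Nonempty} := by
    ext x
    rw [hm0 x]
    constructor
    · intro h0
      rcases Set.eq_empty_or_nonempty (fiber S.1 x) with he | hne
      · rw [aux14_dempty hd (X := ⟨_, aux14_fiberDef S.2 x⟩) he] at h0
        simp at h0
      · exact hne
    · intro hne; exact h x hne
  refine ⟨X0, hX0e, ?_⟩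
  rw [heq, aux14_dempty hd hX1e]
  simp

private lemma aux14_rows1 (hd : IsDimFun d) (S : DefSet L M 2)
    (h : ∀ x, (fiber S.1 x).Nonempty → d 0 ⟨fiber S.1 x, aux14_fiberDef S.2 x⟩ = 1) :
    ∃ X1 : DefSet L M 1, X1.1 = {x | (fiber S.1 x).Nonempty} ∧ d 1 S = d 0 X1 + 1 := by
  obtain ⟨X0, X1, hm0, hm1, heq⟩ := aux14_FIB hd S
  have hX0e : X0.1 = ∅ := by
    ext x
    simp only [Set.mem_empty_iff_false, iff_false]
    intro hx
    have h0 := (hm0 x).mp hx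
    rcases Set.eq_empty_or_nonempty (fiber S.1 x) with he | hne
    · rw [aux14_dempty hd (X := ⟨_, aux14_fiberDef S.2 x⟩) he] at h0
      simp at h0
    · rw [h x hne] at h0
      simp at h0
  have hX1e : X1.1 = {x | (fiber S.1 x).Nonempty} := by
    ext x
    rw [hm1 x]
    constructor
    · intro h1
      rcases Set.eq_empty_or_nonempty (fiber S.1 x) with he | hne
      · rw [aux14_dempty hd (X := ⟨_, aux14_fiberDef S.2 x⟩) he] at h1
        simp at h1
      · exact hne
    · intro hne; exact h x hne
  refine ⟨X1, hX1e, ?_⟩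
  rw [heq, aux14_dempty hd hX0e]
  exact max_eq_right bot_le

/-- Invariance of dimension under definable bijections (graph version). -/
private lemma aux14_dbij (hd : IsDimFun d) (S : DefSet L M 2) (A B : DefSet L M 1)
    (hsub : ∀ x, (fiber S.1 x).Subsingleton)
    (hsub' : ∀ y, {x : Fin 1 → M | y ∈ fiber S.1 x}.Subsingleton)
    (hA : A.1 = {x | (fiber S.1 x).Nonempty})
    (hB : B.1 = {y | ∃ x, y ∈ fiber S.1 x}) :
    d 0 A = d 0 B := by
  have hrow : ∀ x, (fiber S.1 x).Nonempty →
      d 0 ⟨fiber S.1 x, aux14_fiberDef S.2 x⟩ = 0 := by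
    intro x ⟨w, hw⟩
    have he : fiber S.1 x = {w} := (hsub x).eq_singleton_of_mem hw
    exact aux14_dsingle hd (a := w 0)
      (by show fiber S.1 x = {fun _ => w 0}; rw [he, aux14_eta1 w])
  obtain ⟨X0, hX0, hS0⟩ := aux14_rows0 hd S hrow
  let T : DefSet L M 2 := ⟨{v : Fin 2 → M | v ∘ (Equiv.swap (0 : Fin 2) 1) ∈ S.1},
    S.2.preimage_comp (Equiv.swap (0 : Fin 2) 1)⟩
  have hTd : d 1 T = d 1 S := hd.2.2.1 1 (Equiv.swap (0 : Fin 2) 1) S T rfl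
  have hfibT : ∀ y, fiber T.1 y = {x : Fin 1 → M | y ∈ fiber S.1 x} := by
    intro y; ext x; exact aux14_mem_fiber_transp
  have hrowT : ∀ y, (fiber T.1 y).Nonempty →
      d 0 ⟨fiber T.1 y, aux14_fiberDef T.2 y⟩ = 0 := by
    intro y ⟨w, hw⟩
    have he : fiber T.1 y = {w} := by
      refine Set.eq_singleton_iff_unique_mem.mpr ⟨hw, ?_⟩
      intro x hx
      have h1 : x ∈ {x : Fin 1 → M | y ∈ fiber S.1 x} := by rw [← hfibT]; exact hx
      have h2 : w ∈ {x : Fin 1 → M | y ∈ fiber S.1 x} := by rw [← hfibT]; exact hw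
      exact hsub' y h1 h2
    exact aux14_dsingle hd (a := w 0)
      (by show fiber T.1 y = {fun _ => w 0}; rw [he, aux14_eta1 w])
  obtain ⟨Y0, hY0, hT0⟩ := aux14_rows0 hd T hrowT
  have hAX : d 0 A = d 0 X0 := aux14_dcongr (by rw [hA, hX0])
  have hBY : d 0 B = d 0 Y0 := by
    refine aux14_dcongr ?_
    rw [hB, hY0]
    ext y
    simp only [Set.mem_setOf_eq, hfibT y]
    exact ⟨fun ⟨x, hx⟩ => ⟨x, hx⟩, fun ⟨x, hx⟩ => ⟨x, hx⟩⟩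
  rw [hAX, hBY, ← hS0, ← hT0, hTd]

section AuxOrd

variable [LinearOrder M] [AddGroup M] [CovariantClass M M (· + ·) (· < ·)]
  [CovariantClass M M (Function.swap (· + ·)) (· < ·)]

private lemma aux14_defIoi (hlt : LtDefinable L M) (a : M) :
    Set.Definable (Set.univ : Set M) L {y : Fin 1 → M | a < y 0} := by
  have h := aux14_defSub2 (m := 1) hlt (Sum.inr a) (Sum.inl 0)
  have e : {y : Fin 1 → M | ![Sum.elim y id (Sum.inr a), Sum.elim y id (Sum.inl 0)]
      ∈ {v : Fin 2 → M | v 0 < v 1}} = {y : Fin 1 → M | a < y 0} := by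
    ext y; simp
  rwa [e] at h

private lemma aux14_defIio (hlt : LtDefinable L M) (a : M) :
    Set.Definable (Set.univ : Set M) L {y : Fin 1 → M | y 0 < a} := by
  have h := aux14_defSub2 (m := 1) hlt (Sum.inl 0) (Sum.inr a)
  have e : {y : Fin 1 → M | ![Sum.elim y id (Sum.inl 0), Sum.elim y id (Sum.inr a)]
      ∈ {v : Fin 2 → M | v 0 < v 1}} = {y : Fin 1 → M | y 0 < a} := by
    ext y; simp
  rwa [e] at h

private lemma aux14_defIoc (hlt : LtDefinable L M) (a b : M) :
    Set.Definable (Set.univ : Set M) L {y : Fin 1 → M | a < y 0 ∧ y 0 ≤ b} := by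
  have h := (aux14_defIoi hlt a).inter (aux14_defIoi hlt b).compl
  have e : {y : Fin 1 → M | a < y 0} ∩ {y : Fin 1 → M | b < y 0}ᶜ
      = {y : Fin 1 → M | a < y 0 ∧ y 0 ≤ b} := by
    ext y
    simp [not_lt]
  rwa [e] at h

private lemma aux14_defIci (hlt : LtDefinable L M) (a : M) :
    Set.Definable (Set.univ : Set M) L {y : Fin 1 → M | a ≤ y 0} := by
  have h := (aux14_defIio hlt a).compl
  have e : {y : Fin 1 → M | y 0 < a}ᶜ = {y : Fin 1 → M | a ≤ y 0} := by
    ext y; simp [not_lt]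
  rwa [e] at h

/-- Dimension is invariant under translation. -/
private lemma aux14_dTrans (hd : IsDimFun d) (hadd : AddDefinable L M)
    (A B : DefSet L M 1) (c : M)
    (hB : B.1 = {y : Fin 1 → M | (fun _ : Fin 1 => y 0 - c) ∈ A.1}) :
    d 0 B = d 0 A := by
  have hdef1 : Set.Definable (Set.univ : Set M) L
      {v : Fin 2 → M | (fun _ : Fin 1 => v 0) ∈ A.1} :=
    aux14_defSub1 A.2 (Sum.inl 0)
  have hdef2 : Set.Definable (Set.univ : Set M) L {v : Fin 2 → M | v 0 + c = v 1} := by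
    have h := aux14_defSub3 (m := 2) hadd (Sum.inl 0) (Sum.inr c) (Sum.inl 1)
    have e : {v : Fin 2 → M |
        ![Sum.elim v id (Sum.inl 0), Sum.elim v id (Sum.inr c), Sum.elim v id (Sum.inl 1)]
          ∈ {w : Fin 3 → M | w 0 + w 1 = w 2}} = {v : Fin 2 → M | v 0 + c = v 1} := by
      ext v; simp
    rwa [e] at h
  have hdefS : Set.Definable (Set.univ : Set M) L
      {v : Fin 2 → M | (fun _ : Fin 1 => v 0) ∈ A.1 ∧ v 0 + c = v 1} := by
    have h := hdef1.inter hdef2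
    have e : {v : Fin 2 → M | (fun _ : Fin 1 => v 0) ∈ A.1} ∩ {v : Fin 2 → M | v 0 + c = v 1}
        = {v : Fin 2 → M | (fun _ : Fin 1 => v 0) ∈ A.1 ∧ v 0 + c = v 1} := rfl
    rwa [e] at h
  set S : DefSet L M 2 :=
    ⟨{v : Fin 2 → M | (fun _ : Fin 1 => v 0) ∈ A.1 ∧ v 0 + c = v 1}, hdefS⟩ with hSdef
  have hfib : ∀ x y : Fin 1 → M,
      y ∈ fiber S.1 x ↔ ((fun _ : Fin 1 => x 0) ∈ A.1 ∧ x 0 + c = y 0) :=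
    fun x y => aux14_mem_fiber_pred
      (P := fun a b => ((fun _ : Fin 1 => a) ∈ A.1 ∧ a + c = b))
  refine (aux14_dbij hd S A B ?_ ?_ ?_ ?_).symm
  · intro x y hy y' hy'
    have h1 := ((hfib x y).mp hy).2
    have h2 := ((hfib x y').mp hy').2
    exact aux14_ext1 (h1.symm.trans h2)
  · intro y x hx x' hx'
    have h1 := ((hfib x y).mp hx).2
    have h2 := ((hfib x' y).mp hx').2
    exact aux14_ext1 (add_right_cancel (h1.trans h2.symm))
  · ext x
    constructor
    · intro hx
      refine ⟨fun _ => x 0 + c, (hfib x _).mpr ⟨?_, rfl⟩⟩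
      rw [aux14_eta1 x]; exact hx
    · rintro ⟨y, hy⟩
      have h1 := ((hfib x y).mp hy).1
      rwa [aux14_eta1 x] at h1
  · rw [hB]
    ext y
    simp only [Set.mem_setOf_eq]
    constructor
    · intro hy
      refine ⟨fun _ => y 0 - c, (hfib _ y).mpr ⟨?_, ?_⟩⟩
      · exact hy
      · exact sub_add_cancel (y 0) c
    · rintro ⟨x, hx⟩
      obtain ⟨h1, h2⟩ := (hfib x y).mp hx
      have hx0 : x 0 = y 0 - c := eq_sub_of_add_eq h2
      have he : (fun _ : Fin 1 => y 0 - c) = x := by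
        rw [← hx0]; exact aux14_eta1 x
      rw [he]
      rwa [aux14_eta1 x] at h1

/-- Dimension is invariant under negation. -/
private lemma aux14_dNeg (hd : IsDimFun d) (hadd : AddDefinable L M)
    (A B : DefSet L M 1)
    (hB : B.1 = {y : Fin 1 → M | (fun _ : Fin 1 => -(y 0)) ∈ A.1}) :
    d 0 B = d 0 A := by
  have hdef1 : Set.Definable (Set.univ : Set M) L
      {v : Fin 2 → M | (fun _ : Fin 1 => v 0) ∈ A.1} :=
    aux14_defSub1 A.2 (Sum.inl 0)
  have hdef2 : Set.Definable (Set.univ : Set M) L {v : Fin 2 → M | v 0 + v 1 = 0} := by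
    have h := aux14_defSub3 (m := 2) hadd (Sum.inl 0) (Sum.inl 1) (Sum.inr 0)
    have e : {v : Fin 2 → M |
        ![Sum.elim v id (Sum.inl 0), Sum.elim v id (Sum.inl 1), Sum.elim v id (Sum.inr 0)]
          ∈ {w : Fin 3 → M | w 0 + w 1 = w 2}} = {v : Fin 2 → M | v 0 + v 1 = 0} := by
      ext v; simp
    rwa [e] at h
  have hdefS : Set.Definable (Set.univ : Set M) L
      {v : Fin 2 → M | (fun _ : Fin 1 => v 0) ∈ A.1 ∧ v 0 + v 1 = 0} := by
    have h := hdef1.inter hdef2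
    have e : {v : Fin 2 → M | (fun _ : Fin 1 => v 0) ∈ A.1} ∩ {v : Fin 2 → M | v 0 + v 1 = 0}
        = {v : Fin 2 → M | (fun _ : Fin 1 => v 0) ∈ A.1 ∧ v 0 + v 1 = 0} := rfl
    rwa [e] at h
  set S : DefSet L M 2 :=
    ⟨{v : Fin 2 → M | (fun _ : Fin 1 => v 0) ∈ A.1 ∧ v 0 + v 1 = 0}, hdefS⟩ with hSdef
  have hfib : ∀ x y : Fin 1 → M,
      y ∈ fiber S.1 x ↔ ((fun _ : Fin 1 => x 0) ∈ A.1 ∧ x 0 + y 0 = 0) :=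
    fun x y => aux14_mem_fiber_pred
      (P := fun a b => ((fun _ : Fin 1 => a) ∈ A.1 ∧ a + b = 0))
  refine (aux14_dbij hd S A B ?_ ?_ ?_ ?_).symm
  · intro x y hy y' hy'
    have h1 := (neg_eq_of_add_eq_zero_right ((hfib x y).mp hy).2).symm
    have h2 := (neg_eq_of_add_eq_zero_right ((hfib x y').mp hy').2).symm
    exact aux14_ext1 (h1.trans h2.symm)
  · intro y x hx x' hx'
    have h1 := eq_neg_of_add_eq_zero_left ((hfib x y).mp hx).2
    have h2 := eq_neg_of_add_eq_zero_left ((hfib x' y).mp hx').2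
    exact aux14_ext1 (h1.trans h2.symm)
  · ext x
    constructor
    · intro hx
      refine ⟨fun _ => -(x 0), (hfib x _).mpr ⟨?_, ?_⟩⟩
      · rw [aux14_eta1 x]; exact hx
      · exact add_neg_cancel (x 0)
    · rintro ⟨y, hy⟩
      have h1 := ((hfib x y).mp hy).1
      rwa [aux14_eta1 x] at h1
  · rw [hB]
    ext y
    simp only [Set.mem_setOf_eq]
    constructor
    · intro hy
      refine ⟨fun _ => -(y 0), (hfib _ y).mpr ⟨?_, ?_⟩⟩
      · exact hy
      · exact neg_add_cancel (y 0)
    · rintro ⟨x, hx⟩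
      obtain ⟨h1, h2⟩ := (hfib x y).mp hx
      have hx0 : x 0 = -(y 0) := eq_neg_of_add_eq_zero_left h2
      have he : (fun _ : Fin 1 => -(y 0)) = x := by
        rw [← hx0]; exact aux14_eta1 x
      rw [he]
      rwa [aux14_eta1 x] at h1

end AuxOrd

section AuxMain

set_option linter.unusedSectionVars false

variable [LinearOrder M] [DenselyOrdered M] [NoMinOrder M] [NoMaxOrder M]
  [AddGroup M] [CovariantClass M M (· + ·) (· < ·)]
  [CovariantClass M M (Function.swap (· + ·)) (· < ·)]

private lemma aux14_covLE : CovariantClass M M (· + ·) (· ≤ ·) :=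
  covariantClass_le_of_lt M M _

private lemma aux14_covLE' : CovariantClass M M (Function.swap (· + ·)) (· ≤ ·) :=
  covariantClass_le_of_lt M M _

attribute [local instance] aux14_covLE aux14_covLE'

/-- Every interval `(0, t]` with `t > 0` has dimension `1`. -/
private lemma aux14_dIoc_one (hd : IsDimFun d) (hlt : LtDefinable L M)
    (hadd : AddDefinable L M) (hdc : DefinablyComplete L M) :
    ∀ t : M, 0 < t →
      d 0 ⟨{y : Fin 1 → M | 0 < y 0 ∧ y 0 ≤ t}, aux14_defIoc hlt 0 t⟩ = 1 := by
  classical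
  set SIoc : M → DefSet L M 1 :=
    fun s => ⟨{y : Fin 1 → M | 0 < y 0 ∧ y 0 ≤ s}, aux14_defIoc hlt 0 s⟩ with hSIoc
  have hne : ∀ s : M, 0 < s → ({y : Fin 1 → M | 0 < y 0 ∧ y 0 ≤ s}).Nonempty :=
    fun s hs => ⟨fun _ => s, ⟨hs, le_refl s⟩⟩
  -- translation: d (Ioc s (s+s)) = d (Ioc 0 s)
  have htr : ∀ s : M, d 0 ⟨{y : Fin 1 → M | s < y 0 ∧ y 0 ≤ s + s},
      aux14_defIoc hlt s (s + s)⟩ = d 0 (SIoc s) := by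
    intro s
    refine aux14_dTrans hd hadd (SIoc s) _ s ?_
    ext y
    simp only [Set.mem_setOf_eq, hSIoc]
    rw [sub_pos, sub_le_iff_le_add]
  -- doubling
  have hdouble : ∀ s : M, 0 < s → d 0 (SIoc s) = 0 → d 0 (SIoc (s + s)) = 0 := by
    intro s hs h0
    have hun : d 0 (SIoc (s + s)) = max (d 0 (SIoc s))
        (d 0 ⟨{y : Fin 1 → M | s < y 0 ∧ y 0 ≤ s + s}, aux14_defIoc hlt s (s + s)⟩) := by
      refine aux14_dunion hd ?_
      ext y
      simp only [Set.mem_setOf_eq, Set.mem_union, hSIoc]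
      constructor
      · rintro ⟨h1, h2⟩
        rcases le_or_gt (y 0) s with h | h
        · exact Or.inl ⟨h1, h⟩
        · exact Or.inr ⟨h, h2⟩
      · rintro (⟨h1, h2⟩ | ⟨h1, h2⟩)
        · exact ⟨h1, h2.trans (le_add_of_nonneg_left hs.le)⟩
        · exact ⟨lt_trans hs h1, h2⟩
    rw [hun, htr s, h0]
    simp
  -- the 2-dimensional set
  have hdefS1 : Set.Definable (Set.univ : Set M) L {v : Fin 2 → M | 0 < v 1} := by
    have h := aux14_defSub2 (m := 2) hlt (Sum.inr 0) (Sum.inl 1)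
    have e : {v : Fin 2 → M | ![Sum.elim v id (Sum.inr 0), Sum.elim v id (Sum.inl 1)]
        ∈ {w : Fin 2 → M | w 0 < w 1}} = {v : Fin 2 → M | 0 < v 1} := by
      ext v; simp
    rwa [e] at h
  have hdefS2 : Set.Definable (Set.univ : Set M) L {v : Fin 2 → M | v 1 ≤ v 0} := by
    have h := (hlt : Set.Definable (Set.univ : Set M) L {v : Fin 2 → M | v 0 < v 1}).compl
    have e : {v : Fin 2 → M | v 0 < v 1}ᶜ = {v : Fin 2 → M | v 1 ≤ v 0} := by
      ext v; simp [not_lt]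
    rwa [e] at h
  have hdefS : Set.Definable (Set.univ : Set M) L
      {v : Fin 2 → M | 0 < v 1 ∧ v 1 ≤ v 0} := by
    have h := hdefS1.inter hdefS2
    have e : {v : Fin 2 → M | 0 < v 1} ∩ {v : Fin 2 → M | v 1 ≤ v 0}
        = {v : Fin 2 → M | 0 < v 1 ∧ v 1 ≤ v 0} := rfl
    rwa [e] at h
  set Sbig : DefSet L M 2 := ⟨{v : Fin 2 → M | 0 < v 1 ∧ v 1 ≤ v 0}, hdefS⟩ with hSbig
  have hfibS : ∀ x : Fin 1 → M,
      fiber Sbig.1 x = {y : Fin 1 → M | 0 < y 0 ∧ y 0 ≤ x 0} :=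
    fun x => Set.ext fun y => aux14_mem_fiber_pred (P := fun a b => 0 < b ∧ b ≤ a)
  have hfibS_ne : ∀ x : Fin 1 → M, (fiber Sbig.1 x).Nonempty ↔ 0 < x 0 := by
    intro x
    rw [hfibS x]
    constructor
    · rintro ⟨y, hy1, hy2⟩; exact lt_of_lt_of_le hy1 hy2
    · intro hx; exact ⟨fun _ => x 0, hx, le_refl _⟩
  have hfib_dim : ∀ x : Fin 1 → M,
      d 0 ⟨fiber Sbig.1 x, aux14_fiberDef Sbig.2 x⟩ = d 0 (SIoc (x 0)) :=
    fun x => aux14_dcongr (hfibS x)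
  -- main case distinction
  by_cases hall : ∀ s : M, 0 < s → d 0 (SIoc s) = 0
  · exfalso
    -- dim of (0, ∞) is 1
    obtain ⟨b0, hb0⟩ := exists_gt (0 : M)
    have hIoiNe : ({y : Fin 1 → M | 0 < y 0}).Nonempty := ⟨fun _ => b0, hb0⟩
    set Ioi0 : DefSet L M 1 := ⟨{y : Fin 1 → M | 0 < y 0}, aux14_defIoi hlt 0⟩ with hIoi0
    set Iio0 : DefSet L M 1 := ⟨{y : Fin 1 → M | y 0 < 0}, aux14_defIio hlt 0⟩ with hIio0
    set Ici0 : DefSet L M 1 := ⟨{y : Fin 1 → M | 0 ≤ y 0}, aux14_defIci hlt 0⟩ with hIci0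
    have hrefl : d 0 Iio0 = d 0 Ioi0 := by
      refine aux14_dNeg hd hadd Ioi0 Iio0 ?_
      ext y
      simp only [Set.mem_setOf_eq, hIoi0, hIio0]
      rw [neg_pos]
    have hsng : d 0 ⟨({fun _ => 0} : Set (Fin 1 → M)), aux14_defSingle 0⟩ = 0 :=
      aux14_dsingle hd rfl
    have hIciSplit : d 0 Ici0 = max
        (d 0 ⟨({fun _ => 0} : Set (Fin 1 → M)), aux14_defSingle 0⟩) (d 0 Ioi0) := by
      refine aux14_dunion hd ?_
      ext y
      simp only [Set.mem_setOf_eq, Set.mem_union, Set.mem_singleton_iff, hIci0, hIoi0]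
      constructor
      · intro h
        rcases eq_or_lt_of_le h with heq | hlt'
        · exact Or.inl (aux14_ext1 (x := y) (y := fun _ => (0 : M)) heq.symm)
        · exact Or.inr hlt'
      · rintro (rfl | h)
        · exact le_refl _
        · exact h.le
    have hUnivSplit : (1 : WithBot ℕ) = max (d 0 Iio0) (d 0 Ici0) := by
      have hu : d 0 (⟨Set.univ, Set.definable_univ⟩ : DefSet L M 1) = 1 :=
        aux14_duniv hd rfl
      rw [← hu]
      refine aux14_dunion hd ?_
      ext y
      simp only [Set.mem_univ, Set.mem_union, Set.mem_setOf_eq, hIio0, hIci0, true_iff]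
      exact lt_or_ge (y 0) 0
    have hIoi1 : d 0 Ioi0 = 1 := by
      rcases aux14_d01 hd (X := Ioi0) hIoiNe with h | h
      · exfalso
        rw [hrefl, h, hIciSplit, hsng, h] at hUnivSplit
        simp at hUnivSplit
      · exact h
    -- rows of Sbig : d 1 Sbig = d 0 (0,∞) = 1
    obtain ⟨X0', hX0', hrowS⟩ := aux14_rows0 hd Sbig (by
      intro x hxne
      rw [hfib_dim x]
      exact hall (x 0) ((hfibS_ne x).mp hxne))
    have hS1 : d 1 Sbig = 1 := by
      rw [hrowS, aux14_dcongr (d := d) (X := X0') (Y := Ioi0) (by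
        rw [hX0']
        ext x
        rw [Set.mem_setOf_eq, hfibS_ne x]
        rfl)]
      exact hIoi1
    -- transpose
    set Tbig : DefSet L M 2 := ⟨{v : Fin 2 → M | v ∘ (Equiv.swap (0 : Fin 2) 1) ∈ Sbig.1},
      Sbig.2.preimage_comp (Equiv.swap (0 : Fin 2) 1)⟩ with hTbig
    have hTd : d 1 Tbig = d 1 Sbig := hd.2.2.1 1 (Equiv.swap (0 : Fin 2) 1) Sbig Tbig rfl
    have hfibT : ∀ y, fiber Tbig.1 y = {x : Fin 1 → M | 0 < y 0 ∧ y 0 ≤ x 0} := by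
      intro y
      ext x
      rw [hTbig]
      show x ∈ fiber {v : Fin 2 → M | v ∘ (Equiv.swap (0 : Fin 2) 1) ∈ Sbig.1} y ↔ _
      rw [aux14_mem_fiber_transp]
      show y ∈ fiber Sbig.1 x ↔ _
      rw [hfibS x, Set.mem_setOf_eq, Set.mem_setOf_eq]
    -- dim of [c, ∞) is 1 for any c
    have hIci1 : d 0 Ici0 = 1 := by
      rw [hIciSplit, hsng, hIoi1]; rfl
    have hIciC : ∀ c : M, d 0 ⟨{x : Fin 1 → M | c ≤ x 0}, aux14_defIci hlt c⟩ = 1 := by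
      intro c
      rw [← hIci1]
      refine aux14_dTrans hd hadd Ici0 _ c ?_
      ext x
      simp only [Set.mem_setOf_eq, hIci0]
      rw [sub_nonneg]
    obtain ⟨Y1, hY1, hrowT⟩ := aux14_rows1 hd Tbig (by
      intro y hyne
      have hy : 0 < y 0 := by
        obtain ⟨x, hx⟩ := hyne
        rw [hfibT y] at hx
        exact hx.1
      have he : fiber Tbig.1 y = {x : Fin 1 → M | y 0 ≤ x 0} := by
        rw [hfibT y]
        ext x
        simp only [Set.mem_setOf_eq]
        exact ⟨fun h => h.2, fun h => ⟨hy, h⟩⟩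
      rw [aux14_dcongr (d := d) (X := ⟨fiber Tbig.1 y, aux14_fiberDef Tbig.2 y⟩)
        (Y := ⟨{x : Fin 1 → M | y 0 ≤ x 0}, aux14_defIci hlt (y 0)⟩) he]
      exact hIciC (y 0))
    have hT2 : d 1 Tbig = 1 + 1 := by
      rw [hrowT, aux14_dcongr (d := d) (X := Y1) (Y := Ioi0) (by
        rw [hY1]
        ext y
        rw [Set.mem_setOf_eq]
        constructor
        · rintro ⟨x, hx⟩
          rw [hfibT y] at hx
          exact hx.1
        · intro hy
          refine ⟨y, ?_⟩
          rw [hfibT y]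
          exact ⟨hy, le_refl _⟩), hIoi1]
    rw [hS1, hT2] at hTd
    exact absurd hTd (by decide)
  · -- there is s1 > 0 with d (0, s1] ≠ 0 ; conclude for every t
    push_neg at hall
    obtain ⟨s1, hs1pos, hs1ne⟩ := hall
    intro t ht
    by_contra hne1
    have h0 : d 0 (SIoc t) = 0 := (aux14_d01 hd (hne t ht)).resolve_right hne1
    -- the definable set U = {s | d (0,s] = 0}
    obtain ⟨X0, X1, hm0, hm1, _⟩ := aux14_FIB hd Sbig
    have hU : ∀ s : M, ((fun _ : Fin 1 => s) ∈ X0.1) ↔ d 0 (SIoc s) = 0 := by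
      intro s
      rw [hm0 (fun _ => s), hfib_dim (fun _ => s)]
    have hUpos : ∀ s : M, (fun _ : Fin 1 => s) ∈ X0.1 → 0 < s := by
      intro s hs
      by_contra hs'
      have hempty : {y : Fin 1 → M | 0 < y 0 ∧ y 0 ≤ s} = ∅ := by
        ext y
        simp only [Set.mem_setOf_eq, Set.mem_empty_iff_false, iff_false, not_and, not_le]
        intro hy
        exact lt_of_le_of_lt (le_of_not_gt hs') hy
      have := (hU s).mp hs
      rw [aux14_dempty hd (X := SIoc s) hempty] at this
      exact absurd this (by decide)
    have htU : (fun _ : Fin 1 => t) ∈ X0.1 := (hU t).mpr h0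
    -- U is bounded above by s1
    have hbdd : ∀ u : M, (fun _ : Fin 1 => u) ∈ X0.1 → u ≤ s1 := by
      intro u hu
      by_contra hlt'
      have hsu : s1 < u := lt_of_not_ge hlt'
      have hmono : d 0 (SIoc s1) ≤ d 0 (SIoc u) := by
        refine aux14_dmono hd ?_
        intro y hy
        exact ⟨hy.1, hy.2.trans hsu.le⟩
      rw [(hU u).mp hu] at hmono
      have hge := aux14_dnonneg hd (X := SIoc s1) (hne s1 hs1pos)
      exact hs1ne (le_antisymm hmono hge)
    -- supremum of U
    have hlub := (hdc X0).1 ⟨t, htU⟩ ⟨s1, by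
      rintro u hu
      exact hbdd u hu⟩
    obtain ⟨c, hc⟩ := hlub
    have hct : t ≤ c := hc.1 htU
    have hcpos : 0 < c := lt_of_lt_of_le ht hct
    -- U is closed under doubling
    have hdbl : ∀ u : M, (fun _ : Fin 1 => u) ∈ X0.1 → (fun _ : Fin 1 => u + u) ∈ X0.1 := by
      intro u hu
      exact (hU _).mpr (hdouble u (hUpos u hu) ((hU u).mp hu))
    -- find u ∈ U with c - t < u
    obtain ⟨u1, hu1U, hu1gt⟩ : ∃ u1 : M, (fun _ : Fin 1 => u1) ∈ X0.1 ∧ c - t < u1 := by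
      by_contra hcon
      push_neg at hcon
      have hub : c - t ∈ upperBounds (asSet1 X0.1) := by
        rintro u hu
        exact hcon u hu
      have hle := hc.2 hub
      exact absurd (sub_lt_self c ht) (not_lt.mpr hle)
    rcases le_total t u1 with hcase | hcase
    · have hmem := hdbl u1 hu1U
      have hle : u1 + u1 ≤ c := hc.1 hmem
      have hgt : c < u1 + u1 :=
        lt_of_lt_of_le (sub_lt_iff_lt_add.mp hu1gt) (add_le_add_right hcase u1)
      exact absurd hle (not_le.mpr hgt)
    · have hmem := hdbl t htU
      have hle : t + t ≤ c := hc.1 hmem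
      have hgt : c < t + t :=
        lt_of_lt_of_le (sub_lt_iff_lt_add.mp hu1gt) (add_le_add_left hcase t)
      exact absurd hle (not_le.mpr hgt)

/-- Every interval `(a, b]` with `a < b` has dimension `1`. -/
private lemma aux14_dIoc_gen (hd : IsDimFun d) (hlt : LtDefinable L M)
    (hadd : AddDefinable L M) (hdc : DefinablyComplete L M) {a b : M} (hab : a < b) :
    d 0 ⟨{y : Fin 1 → M | a < y 0 ∧ y 0 ≤ b}, aux14_defIoc hlt a b⟩ = 1 := by
  have h1 := aux14_dIoc_one (d := d) hd hlt hadd hdc (b - a) (sub_pos.mpr hab)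
  rw [← h1]
  refine aux14_dTrans hd hadd _ _ a ?_
  ext y
  simp only [Set.mem_setOf_eq]
  rw [sub_pos, sub_le_sub_iff_right]

end AuxMain

private lemma aux14_nhds [LinearOrder M] [NoMaxOrder M] {U : Set M}
    (hU : (orderTop M).IsOpen U) {x : M} (hx : x ∈ U) :
    ∃ b, x < b ∧ Set.Ioo x b ⊆ U := by
  have h : TopologicalSpace.GenerateOpen
      {s : Set M | (∃ a, s = Set.Ioi a) ∨ (∃ a, s = Set.Iio a)} U := hU
  clear hU
  revert hx
  induction h with
  | basic s hs =>
    intro hx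
    rcases hs with ⟨a, rfl⟩ | ⟨a, rfl⟩
    · obtain ⟨b, hb⟩ := exists_gt x
      exact ⟨b, hb, fun y hy => lt_trans hx hy.1⟩
    · exact ⟨a, hx, fun y hy => hy.2⟩
  | univ =>
    intro _
    obtain ⟨b, hb⟩ := exists_gt x
    exact ⟨b, hb, fun y _ => trivial⟩
  | inter s t hs ht IHs IHt =>
    intro hx
    obtain ⟨b1, hb1, hsub1⟩ := IHs hx.1
    obtain ⟨b2, hb2, hsub2⟩ := IHt hx.2
    exact ⟨min b1 b2, lt_min hb1 hb2, fun y hy =>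
      ⟨hsub1 ⟨hy.1, lt_of_lt_of_le hy.2 (min_le_left _ _)⟩,
       hsub2 ⟨hy.1, lt_of_lt_of_le hy.2 (min_le_right _ _)⟩⟩⟩
  | sUnion S hS IH =>
    intro hx
    obtain ⟨s, hsS, hxs⟩ := hx
    obtain ⟨b, hb, hsub⟩ := IH s hsS hxs
    exact ⟨b, hb, fun y hy => ⟨s, hsS, hsub hy⟩⟩

private lemma aux14_snoc3_two (v : Fin 2 → M) (z : M) :
    (Fin.snoc v z : Fin 3 → M) 2 = z := by
  have h : (2 : Fin 3) = Fin.last 2 := rfl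
  rw [h, Fin.snoc_last]

private lemma aux14_snoc3_zero (v : Fin 2 → M) (z : M) :
    (Fin.snoc v z : Fin 3 → M) 0 = v 0 := by
  have h : (0 : Fin 3) = Fin.castSucc (0 : Fin 2) := rfl
  rw [h, Fin.snoc_castSucc]

private lemma aux14_snoc3_one (v : Fin 2 → M) (z : M) :
    (Fin.snoc v z : Fin 3 → M) 1 = v 1 := by
  have h : (1 : Fin 3) = Fin.castSucc (1 : Fin 2) := rfl
  rw [h, Fin.snoc_castSucc]

end Aux14


/-- Let `M` be a definably complete expansion of an ordered group and `dim`
a dimension function on `M`. If there is a definable non-closed discrete subset `Z` of `M`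
whose closure is a union of finitely many definable discrete sets, then `dim X = 0` for every
nonempty definable discrete subset `X` of `M`. -/
theorem statement_14 (L : FirstOrder.Language.{v, w}) (M : Type u) [L.Structure M]
    [LinearOrder M] [DenselyOrdered M] [NoMinOrder M] [NoMaxOrder M]
    [AddGroup M] [CovariantClass M M (· + ·) (· < ·)]
    [CovariantClass M M (Function.swap (· + ·)) (· < ·)]
    (hlt : LtDefinable L M) (hadd : AddDefinable L M) (hdc : DefinablyComplete L M)
    (d : ∀ n : ℕ, DefSet L M (n + 1) → WithBot ℕ) (hd : d ∈ DimFuns L M)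
    (Z : DefSet L M 1)
    (hZdisc : DiscreteIn (orderTop M) (asSet1 Z.1))
    (hZnotclosed : ¬ (orderTop M).IsOpen ((asSet1 Z.1)ᶜ))
    (hZclosure : ∃ (k : ℕ) (D : Fin k → DefSet L M 1),
      (∀ i, DiscreteIn (orderTop M) (asSet1 (D i).1)) ∧
      @closure M (orderTop M) (asSet1 Z.1) = ⋃ i, asSet1 (D i).1) :
    ∀ X : DefSet L M 1, (asSet1 X.1).Nonempty → DiscreteIn (orderTop M) (asSet1 X.1) →
      d 0 X = 0 := by
  classical
  intro X hXne hXdisc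
  have hd' : IsDimFun d := hd
  haveI : CovariantClass M M (· + ·) (· ≤ ·) := covariantClass_le_of_lt M M _
  haveI : CovariantClass M M (Function.swap (· + ·)) (· ≤ ·) := covariantClass_le_of_lt M M _
  obtain ⟨a0, ha0⟩ := hXne
  -- the gap set G
  have hdefG1 : Set.Definable (Set.univ : Set M) L
      {v : Fin 2 → M | (fun _ : Fin 1 => v 0) ∈ X.1} :=
    aux14_defSub1 X.2 (Sum.inl 0)
  have hdefP3A : Set.Definable (Set.univ : Set M) L
      {w : Fin 3 → M | (fun _ : Fin 1 => w 2) ∈ X.1} :=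
    aux14_defSub1 X.2 (Sum.inl 2)
  have hdefP3B : Set.Definable (Set.univ : Set M) L {w : Fin 3 → M | w 0 < w 2} := by
    have h := aux14_defSub2 (m := 3) hlt (Sum.inl 0) (Sum.inl 2)
    have e : {w : Fin 3 → M | ![Sum.elim w id (Sum.inl 0), Sum.elim w id (Sum.inl 2)]
        ∈ {v : Fin 2 → M | v 0 < v 1}} = {w : Fin 3 → M | w 0 < w 2} := by
      ext w; simp
    rwa [e] at h
  have hdefP3C : Set.Definable (Set.univ : Set M) L {w : Fin 3 → M | w 2 < w 1} := by
    have h := aux14_defSub2 (m := 3) hlt (Sum.inl 2) (Sum.inl 1)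
    have e : {w : Fin 3 → M | ![Sum.elim w id (Sum.inl 2), Sum.elim w id (Sum.inl 1)]
        ∈ {v : Fin 2 → M | v 0 < v 1}} = {w : Fin 3 → M | w 2 < w 1} := by
      ext w; simp
    rwa [e] at h
  have hdefP3 : Set.Definable (Set.univ : Set M) L
      {w : Fin 3 → M | (fun _ : Fin 1 => w 2) ∈ X.1 ∧ w 0 < w 2 ∧ w 2 < w 1} := by
    have h := hdefP3A.inter (hdefP3B.inter hdefP3C)
    have e : {w : Fin 3 → M | (fun _ : Fin 1 => w 2) ∈ X.1}
          ∩ ({w : Fin 3 → M | w 0 < w 2} ∩ {w : Fin 3 → M | w 2 < w 1})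
        = {w : Fin 3 → M | (fun _ : Fin 1 => w 2) ∈ X.1 ∧ w 0 < w 2 ∧ w 2 < w 1} := rfl
    rwa [e] at h
  have hdefBad : Set.Definable (Set.univ : Set M) L
      ((fun w : Fin 3 → M => w ∘ (Fin.castSucc : Fin 2 → Fin 3)) ''
        {w : Fin 3 → M | (fun _ : Fin 1 => w 2) ∈ X.1 ∧ w 0 < w 2 ∧ w 2 < w 1}) :=
    hdefP3.image_comp _
  have hBadEq : ((fun w : Fin 3 → M => w ∘ (Fin.castSucc : Fin 2 → Fin 3)) ''
        {w : Fin 3 → M | (fun _ : Fin 1 => w 2) ∈ X.1 ∧ w 0 < w 2 ∧ w 2 < w 1})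
      = {v : Fin 2 → M | ∃ z : M, (fun _ : Fin 1 => z) ∈ X.1 ∧ v 0 < z ∧ z < v 1} := by
    ext v
    constructor
    · rintro ⟨w, hw, rfl⟩
      exact ⟨w 2, hw.1, hw.2.1, hw.2.2⟩
    · rintro ⟨z, hz, h1, h2⟩
      refine ⟨Fin.snoc v z, ⟨?_, ?_, ?_⟩, ?_⟩
      · rw [aux14_snoc3_two]; exact hz
      · rw [aux14_snoc3_zero, aux14_snoc3_two]; exact h1
      · rw [aux14_snoc3_two, aux14_snoc3_one]; exact h2
      · exact Fin.snoc_comp_castSucc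
  have hdefG : Set.Definable (Set.univ : Set M) L
      {v : Fin 2 → M | ((fun _ : Fin 1 => v 0) ∈ X.1 ∧ v 0 < v 1) ∧
        ¬ ∃ z : M, (fun _ : Fin 1 => z) ∈ X.1 ∧ v 0 < z ∧ z < v 1} := by
    rw [hBadEq] at hdefBad
    have h := (hdefG1.inter (hlt : Set.Definable (Set.univ : Set M) L
      {v : Fin 2 → M | v 0 < v 1})).inter hdefBad.compl
    have e : ({v : Fin 2 → M | (fun _ : Fin 1 => v 0) ∈ X.1}
          ∩ {v : Fin 2 → M | v 0 < v 1})
          ∩ {v : Fin 2 → M | ∃ z : M, (fun _ : Fin 1 => z) ∈ X.1 ∧ v 0 < z ∧ z < v 1}ᶜ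
        = {v : Fin 2 → M | ((fun _ : Fin 1 => v 0) ∈ X.1 ∧ v 0 < v 1) ∧
            ¬ ∃ z : M, (fun _ : Fin 1 => z) ∈ X.1 ∧ v 0 < z ∧ z < v 1} := rfl
    rwa [e] at h
  set G : DefSet L M 2 := ⟨{v : Fin 2 → M | ((fun _ : Fin 1 => v 0) ∈ X.1 ∧ v 0 < v 1) ∧
      ¬ ∃ z : M, (fun _ : Fin 1 => z) ∈ X.1 ∧ v 0 < z ∧ z < v 1}, hdefG⟩ with hG
  have hfibG : ∀ x y : Fin 1 → M, y ∈ fiber G.1 x ↔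
      (((fun _ : Fin 1 => x 0) ∈ X.1 ∧ x 0 < y 0) ∧
        ¬ ∃ z : M, (fun _ : Fin 1 => z) ∈ X.1 ∧ x 0 < z ∧ z < y 0) :=
    fun x y => aux14_mem_fiber_pred
      (P := fun a b => (((fun _ : Fin 1 => a) ∈ X.1 ∧ a < b) ∧
        ¬ ∃ z : M, (fun _ : Fin 1 => z) ∈ X.1 ∧ a < z ∧ z < b))
  -- discreteness: gaps to the right
  have hgap : ∀ a : M, a ∈ asSet1 X.1 →
      ∃ b, a < b ∧ ∀ z, z ∈ Set.Ioo a b → z ∉ asSet1 X.1 := by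
    intro a ha
    obtain ⟨U, hUopen, hUint⟩ := hXdisc a ha
    have haU : a ∈ U := by
      have h1 : a ∈ U ∩ asSet1 X.1 := by rw [hUint]; exact Set.mem_singleton a
      exact h1.1
    obtain ⟨b, hab, hsub⟩ := aux14_nhds hUopen haU
    refine ⟨b, hab, fun z hz hzX => ?_⟩
    have h1 : z ∈ U ∩ asSet1 X.1 := ⟨hsub hz, hzX⟩
    rw [hUint] at h1
    exact absurd (h1 : z = a) (ne_of_gt hz.1)
  -- fibers of G over X are nonempty and have dimension 1
  have hfib_val : ∀ x : Fin 1 → M, x ∈ X.1 →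
      ∃ c, x 0 < c ∧ {y : Fin 1 → M | x 0 < y 0 ∧ y 0 ≤ c} ⊆ fiber G.1 x := by
    intro x hx
    have hx0 : x 0 ∈ asSet1 X.1 := by
      show (fun _ : Fin 1 => x 0) ∈ X.1
      rw [aux14_eta1 x]; exact hx
    obtain ⟨b, hab, hbgap⟩ := hgap (x 0) hx0
    obtain ⟨c, hc1, hc2⟩ := exists_between hab
    refine ⟨c, hc1, fun y hy => ?_⟩
    refine (hfibG x y).mpr ⟨⟨?_, hy.1⟩, ?_⟩
    · rw [aux14_eta1 x]; exact hx
    · rintro ⟨z, hzX, hz1, hz2⟩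
      exact hbgap z ⟨hz1, lt_of_lt_of_le hz2 (hy.2.trans hc2.le)⟩ hzX
  have hfibG_ne : ∀ x : Fin 1 → M, (fiber G.1 x).Nonempty ↔ x ∈ X.1 := by
    intro x
    constructor
    · rintro ⟨y, hy⟩
      have h1 := ((hfibG x y).mp hy).1.1
      rwa [aux14_eta1 x] at h1
    · intro hx
      obtain ⟨c, hc1, hsub⟩ := hfib_val x hx
      exact ⟨fun _ => c, hsub ⟨hc1, le_refl c⟩⟩
  obtain ⟨X1', hX1', hrowG⟩ := aux14_rows1 hd' G (by
    intro x hxne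
    have hx : x ∈ X.1 := (hfibG_ne x).mp hxne
    obtain ⟨c, hc1, hsub⟩ := hfib_val x hx
    have hmono := aux14_dmono (d := d) hd' (n := 0)
      (X := ⟨{y : Fin 1 → M | x 0 < y 0 ∧ y 0 ≤ c}, aux14_defIoc hlt (x 0) c⟩)
      (Y := ⟨fiber G.1 x, aux14_fiberDef G.2 x⟩) hsub
    rw [aux14_dIoc_gen hd' hlt hadd hdc hc1] at hmono
    exact le_antisymm (aux14_dle1 hd' _) hmono)
  have hGval : d 1 G = d 0 X + 1 := by
    rw [hrowG, aux14_dcongr (d := d) (X := X1') (Y := X) (by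
      rw [hX1']
      ext x
      rw [Set.mem_setOf_eq, hfibG_ne x])]
  -- transpose of G has subsingleton fibers
  set T : DefSet L M 2 := ⟨{v : Fin 2 → M | v ∘ (Equiv.swap (0 : Fin 2) 1) ∈ G.1},
    G.2.preimage_comp (Equiv.swap (0 : Fin 2) 1)⟩ with hT
  have hTd : d 1 T = d 1 G := hd'.2.2.1 1 (Equiv.swap (0 : Fin 2) 1) G T rfl
  have hfibT : ∀ y x : Fin 1 → M, x ∈ fiber T.1 y ↔ y ∈ fiber G.1 x :=
    fun y x => aux14_mem_fiber_transp
  obtain ⟨Y0, hY0, hrowT⟩ := aux14_rows0 hd' T (by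
    intro y hyne
    obtain ⟨w, hw⟩ := hyne
    have hsing : fiber T.1 y = {w} := by
      refine Set.eq_singleton_iff_unique_mem.mpr ⟨hw, fun x hx => ?_⟩
      obtain ⟨⟨hxX, hxy⟩, hxno⟩ := (hfibG x y).mp ((hfibT y x).mp hx)
      obtain ⟨⟨hwX, hwy⟩, hwno⟩ := (hfibG w y).mp ((hfibT y w).mp hw)
      rcases lt_trichotomy (x 0) (w 0) with hlt' | heq | hgt'
      · exact absurd ⟨w 0, hwX, hlt', hwy⟩ hxno
      · exact aux14_ext1 heq
      · exact absurd ⟨x 0, hxX, hgt', hxy⟩ hwno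
    exact aux14_dsingle hd' (a := w 0)
      (by show fiber T.1 y = {fun _ => w 0}; rw [hsing, aux14_eta1 w]))
  have hTle : d 1 T ≤ 1 := by
    rw [hrowT]
    exact aux14_dle1 hd' Y0
  rw [hTd, hGval] at hTle
  rcases aux14_d01 hd' (X := X) ⟨fun _ => a0, ha0⟩ with h | h
  · exact h
  · exfalso
    rw [h] at hTle
    exact absurd hTle (by decide)


end PaperDim
end

section
/- Let 𝓜 = (M,<,…) be an o-minimal structure and I, I₁, I₂ definable subsets of M. Then: (1) M∖I is self-sufficient if I is self-sufficient and M∖I is infinite; (2) I₁ ∩ I₂ is self-sufficient if I₁ and I₂ are self-sufficient and I₁ ∩ I₂ is infinite; (3) I₁ ∪ I₂ is self-sufficient if I₁ and I₂ are self-sufficient. -/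
open FirstOrder FirstOrder.Language Set

universe u v w

namespace PaperDim

section SSHelpers

variable {L : FirstOrder.Language.{v, w}} {M : Type u} [L.Structure M]

private lemma eta2' (v : Fin 2 → M) : ![v 0, v 1] = v := by
  funext i; fin_cases i <;> rfl

private lemma comp1' (v : Fin 2 → M) (j : Fin 2) :
    v ∘ (![j] : Fin 1 → Fin 2) = fun _ => v j := by
  funext i; fin_cases i; rfl

/-- The swap of a binary relation. -/
def swapSet (G : Set (Fin 2 → M)) : Set (Fin 2 → M) := {v | ![v 1, v 0] ∈ G}

lemma swap_def {G : Set (Fin 2 → M)} (h : Set.Definable (Set.univ : Set M) L G) :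
    Set.Definable (Set.univ : Set M) L (swapSet G) := by
  have key : ∀ v : Fin 2 → M, v ∘ (![1, 0] : Fin 2 → Fin 2) = ![v 1, v 0] := by
    intro v; funext i; fin_cases i <;> rfl
  have : swapSet G = (fun g : Fin 2 → M => g ∘ (![1, 0] : Fin 2 → Fin 2)) ⁻¹' G := by
    ext v; simp [swapSet, key v]
  rw [this]
  exact h.preimage_comp _

lemma swap_bij {G : Set (Fin 2 → M)} {A B : Set M} (h : IsDefBijectionGraph G A B) :
    IsDefBijectionGraph (swapSet G) B A := by
  obtain ⟨h1, h2, h3⟩ := h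
  refine ⟨fun v hv => ⟨(h1 _ hv).2, (h1 _ hv).1⟩, fun x hx => ?_, fun y hy => ?_⟩
  · simpa [swapSet] using h3 x hx
  · simpa [swapSet] using h2 y hy

lemma graph_infinite {G : Set (Fin 2 → M)} {A B : Set M}
    (h : IsDefBijectionGraph G A B) (hB : B.Infinite) : A.Infinite := by
  obtain ⟨h1, h2, h3⟩ := h
  have : Infinite B := hB.to_subtype
  have hspec : ∀ y : B, ![(h3 y y.2).exists.choose, (y : M)] ∈ G :=
    fun y => (h3 y y.2).exists.choose_spec
  apply Set.infinite_of_injective_forall_mem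
    (f := fun y : B => (h3 y y.2).exists.choose)
  · intro y y' hyy'
    have hy := hspec y
    have hy' := hspec y'
    have hyy'' : (h3 y y.2).exists.choose = (h3 y' y'.2).exists.choose := hyy'
    rw [hyy''] at hy
    set x := (h3 y' y'.2).exists.choose
    have hxA : x ∈ A := by
      have := (h1 _ hy).1
      simpa using this
    obtain ⟨z, hz, hzu⟩ := h2 x hxA
    have e1 : (y : M) = z := hzu _ hy
    have e2 : (y' : M) = z := hzu _ hy'
    exact Subtype.ext (e1.trans e2.symm)
  · intro y
    have := (h1 _ (hspec y)).1
    simpa using this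

lemma restrict_range (G : DefSet L M 2) {A B : Set M}
    (hG : IsDefBijectionGraph G.1 A B) (B' : DefSet L M 1) (hB' : asSet1 B'.1 ⊆ B) :
    ∃ (A' : DefSet L M 1) (G' : DefSet L M 2),
      asSet1 A'.1 ⊆ A ∧ IsDefBijectionGraph G'.1 (asSet1 A'.1) (asSet1 B'.1) ∧
      ((asSet1 B'.1).Infinite → (asSet1 A'.1).Infinite) := by
  obtain ⟨h1, h2, h3⟩ := hG
  set G'set : Set (Fin 2 → M) :=
    G.1 ∩ ((fun g : Fin 2 → M => g ∘ (![1] : Fin 1 → Fin 2)) ⁻¹' B'.1) with hG'eq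
  have hG'def : Set.Definable (Set.univ : Set M) L G'set :=
    G.2.inter (B'.2.preimage_comp _)
  have memG' : ∀ v : Fin 2 → M, v ∈ G'set ↔ v ∈ G.1 ∧ v 1 ∈ asSet1 B'.1 := by
    intro v
    rw [hG'eq]
    simp only [Set.mem_inter_iff, Set.mem_preimage, comp1']
    rfl
  set A1 : Set (Fin 1 → M) :=
    (fun g : Fin 2 → M => g ∘ (![0] : Fin 1 → Fin 2)) '' G'set with hA1
  have hA1def : Set.Definable (Set.univ : Set M) L A1 := hG'def.image_comp _
  have memA1 : ∀ a : M, a ∈ asSet1 A1 ↔ ∃ v ∈ G'set, v 0 = a := by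
    intro a
    constructor
    · rintro ⟨v, hv, hva⟩
      exact ⟨v, hv, by simpa [comp1'] using congrFun hva 0⟩
    · rintro ⟨v, hv, rfl⟩
      exact ⟨v, hv, by show v ∘ ![0] = _; rw [comp1']⟩
  have hbij : IsDefBijectionGraph G'set (asSet1 A1) (asSet1 B'.1) := by
    refine ⟨fun v hv => ?_, fun x hx => ?_, fun y hy => ?_⟩
    · exact ⟨(memA1 _).mpr ⟨v, hv, rfl⟩, ((memG' v).mp hv).2⟩
    · obtain ⟨v, hv, hv0⟩ := (memA1 x).mp hx
      obtain ⟨hvG, hv1⟩ := (memG' v).mp hv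
      have hxA : x ∈ A := hv0 ▸ (h1 v hvG).1
      obtain ⟨z, hz, hzu⟩ := h2 x hxA
      have hveq : ![x, v 1] = v := by rw [← hv0]; exact eta2' v
      refine ⟨v 1, show ![x, v 1] ∈ G'set by rw [hveq]; exact hv, ?_⟩
      · intro y' hy'
        obtain ⟨hy'G, -⟩ := (memG' _).mp hy'
        have h1' := hzu _ hy'G
        have hv1z : v 1 = z := hzu _ (show ![x, v 1] ∈ G.1 by rw [hveq]; exact hvG)
        rw [h1', hv1z]
    · have hyB : y ∈ B := hB' hy
      obtain ⟨x, hx, hxu⟩ := h3 y hyB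
      refine ⟨x, (memG' _).mpr ⟨hx, by simpa using hy⟩, fun x' hx' => hxu x' ((memG' _).mp hx').1⟩
  exact ⟨⟨A1, hA1def⟩, ⟨G'set, hG'def⟩,
    fun a ha => by obtain ⟨v, hv, rfl⟩ := (memA1 a).mp ha; exact (h1 v ((memG' v).mp hv).1).1,
    hbij, fun h => graph_infinite hbij h⟩

lemma restrict_dom (G : DefSet L M 2) {A B : Set M}
    (hG : IsDefBijectionGraph G.1 A B) (A' : DefSet L M 1) (hA' : asSet1 A'.1 ⊆ A) :
    ∃ (B' : DefSet L M 1) (G' : DefSet L M 2),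
      asSet1 B'.1 ⊆ B ∧ IsDefBijectionGraph G'.1 (asSet1 A'.1) (asSet1 B'.1) ∧
      ((asSet1 A'.1).Infinite → (asSet1 B'.1).Infinite) := by
  obtain ⟨B', G'', hsub, hbij, hinf⟩ :=
    restrict_range (⟨swapSet G.1, swap_def G.2⟩ : DefSet L M 2) (swap_bij hG) A' hA'
  exact ⟨B', ⟨swapSet G''.1, swap_def G''.2⟩, hsub, swap_bij hbij, hinf⟩

lemma split_infinite {S A B : Set M} (hS : S.Infinite) (hsub : S ⊆ A ∪ B) :
    (S ∩ A).Infinite ∨ (S ∩ B).Infinite := by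
  by_contra h
  push_neg at h
  obtain ⟨hA, hB⟩ := h
  have : S ⊆ (S ∩ A) ∪ (S ∩ B) := by
    intro x hx
    rcases hsub hx with h' | h'
    · exact Or.inl ⟨hx, h'⟩
    · exact Or.inr ⟨hx, h'⟩
  exact hS ((hA.union hB).subset this)

end SSHelpers

/-- In an o-minimal structure: (1) the complement of a self-sufficient set
is self-sufficient if it is infinite; (2) the intersection of two self-sufficient sets is
self-sufficient if it is infinite; (3) the union of two self-sufficient sets is
self-sufficient. -/
theorem statement_15 (L : FirstOrder.Language.{v, w}) (M : Type u) [L.Structure M]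
    [LinearOrder M] [DenselyOrdered M] [NoMinOrder M] [NoMaxOrder M]
    (hlt : LtDefinable L M) (hom : OMinimal L M)
    (I I₁ I₂ : DefSet L M 1) :
    (SelfSufficient L M (asSet1 I.1) → ((asSet1 I.1)ᶜ : Set M).Infinite →
      SelfSufficient L M ((asSet1 I.1)ᶜ)) ∧
    (SelfSufficient L M (asSet1 I₁.1) → SelfSufficient L M (asSet1 I₂.1) →
      (asSet1 I₁.1 ∩ asSet1 I₂.1).Infinite →
      SelfSufficient L M (asSet1 I₁.1 ∩ asSet1 I₂.1)) ∧
    (SelfSufficient L M (asSet1 I₁.1) → SelfSufficient L M (asSet1 I₂.1) →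
      SelfSufficient L M (asSet1 I₁.1 ∪ asSet1 I₂.1)) := by
  constructor
  · rintro hSS hcinf
    refine ⟨hcinf, ?_⟩
    rintro J₁ J₂ h₁ h₂ hJ₁ hJ₂ ⟨G, hG⟩
    rw [compl_compl] at h₂
    exact hSS.2 J₂ J₁ h₂ h₁ hJ₂ hJ₁ ⟨⟨swapSet G.1, swap_def G.2⟩, swap_bij hG⟩
  constructor
  · rintro hSS₁ hSS₂ hinf
    refine ⟨hinf, ?_⟩
    rintro J₁ J₂ h₁ h₂ hJ₁ hJ₂ ⟨G, hG⟩
    have h₂' : asSet1 J₂.1 ⊆ (asSet1 I₁.1)ᶜ ∪ (asSet1 I₂.1)ᶜ := by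
      intro x hx
      have := h₂ hx
      rw [Set.mem_compl_iff, Set.mem_inter_iff] at this
      by_cases hx1 : x ∈ asSet1 I₁.1
      · exact Or.inr (fun hx2 => this ⟨hx1, hx2⟩)
      · exact Or.inl hx1
    rcases split_infinite hJ₂ h₂' with hcase | hcase
    · set J₂' : DefSet L M 1 := ⟨J₂.1 ∩ (I₁.1)ᶜ, J₂.2.inter I₁.2.compl⟩ with hJ₂'
      have hAs : asSet1 J₂'.1 = asSet1 J₂.1 ∩ (asSet1 I₁.1)ᶜ := rfl
      obtain ⟨J₁', G', hsub, hbij, hinf'⟩ :=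
        restrict_range G hG J₂' (by rw [hAs]; exact Set.inter_subset_left)
      refine hSS₁.2 J₁' J₂' (hsub.trans (h₁.trans Set.inter_subset_left))
        (by rw [hAs]; exact Set.inter_subset_right)
        (hinf' (by rw [hAs]; exact hcase)) (by rw [hAs]; exact hcase) ⟨G', hbij⟩
    · set J₂' : DefSet L M 1 := ⟨J₂.1 ∩ (I₂.1)ᶜ, J₂.2.inter I₂.2.compl⟩ with hJ₂'
      have hAs : asSet1 J₂'.1 = asSet1 J₂.1 ∩ (asSet1 I₂.1)ᶜ := rfl
      obtain ⟨J₁', G', hsub, hbij, hinf'⟩ :=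
        restrict_range G hG J₂' (by rw [hAs]; exact Set.inter_subset_left)
      refine hSS₂.2 J₁' J₂' (hsub.trans (h₁.trans Set.inter_subset_right))
        (by rw [hAs]; exact Set.inter_subset_right)
        (hinf' (by rw [hAs]; exact hcase)) (by rw [hAs]; exact hcase) ⟨G', hbij⟩
  · rintro hSS₁ hSS₂
    refine ⟨hSS₁.1.mono Set.subset_union_left, ?_⟩
    rintro J₁ J₂ h₁ h₂ hJ₁ hJ₂ ⟨G, hG⟩
    rcases split_infinite hJ₁ h₁ with hcase | hcase
    · set J₁' : DefSet L M 1 := ⟨J₁.1 ∩ I₁.1, J₁.2.inter I₁.2⟩ with hJ₁'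
      have hAs : asSet1 J₁'.1 = asSet1 J₁.1 ∩ asSet1 I₁.1 := rfl
      obtain ⟨J₂', G', hsub, hbij, hinf'⟩ :=
        restrict_dom G hG J₁' (by rw [hAs]; exact Set.inter_subset_left)
      refine hSS₁.2 J₁' J₂' (by rw [hAs]; exact Set.inter_subset_right)
        (hsub.trans ?_) (by rw [hAs]; exact hcase) (hinf' (by rw [hAs]; exact hcase)) ⟨G', hbij⟩
      exact h₂.trans (Set.compl_subset_compl.mpr Set.subset_union_left)
    · set J₁' : DefSet L M 1 := ⟨J₁.1 ∩ I₂.1, J₁.2.inter I₂.2⟩ with hJ₁'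
      have hAs : asSet1 J₁'.1 = asSet1 J₁.1 ∩ asSet1 I₂.1 := rfl
      obtain ⟨J₂', G', hsub, hbij, hinf'⟩ :=
        restrict_dom G hG J₁' (by rw [hAs]; exact Set.inter_subset_left)
      refine hSS₂.2 J₁' J₂' (by rw [hAs]; exact Set.inter_subset_right)
        (hsub.trans ?_) (by rw [hAs]; exact hcase) (hinf' (by rw [hAs]; exact hcase)) ⟨G', hbij⟩
      exact h₂.trans (Set.compl_subset_compl.mpr Set.subset_union_right)

end PaperDim
end

section
/- Let 𝓜 = (M,<,…) be an o-minimal structure having a generating system {C₁,…,C_m} of minimally self-sufficient sets. Then |𝔇(𝓜)| = 2^m − 1, where 𝔇(𝓜) is the set of equivalence classes of self-sufficient definable subsets of M under the relation of having finite symmetric difference. -/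
open FirstOrder FirstOrder.Language Set

universe u v w

namespace PaperDim

section Aux

variable {L : FirstOrder.Language.{v, w}} {M : Type u} [L.Structure M]

lemma asSet1_biUnion {m : ℕ} (C : Fin m → DefSet L M 1) (S : Finset (Fin m)) :
    asSet1 (⋃ i ∈ S, (C i).1) = ⋃ i ∈ S, asSet1 (C i).1 := by
  ext a; simp [asSet1]

/-- Key lemma: a union of a nonempty finite family of self-sufficient sets is
self-sufficient. -/
lemma selfSufficient_biUnion {m : ℕ} (C : Fin m → DefSet L M 1)
    (hss : ∀ i, SelfSufficient L M (asSet1 (C i).1))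
    (S : Finset (Fin m)) (hS : S.Nonempty) :
    SelfSufficient L M (⋃ i ∈ S, asSet1 (C i).1) := by
  classical
  obtain ⟨i₀, hi₀⟩ := hS
  constructor
  · exact Set.Infinite.mono (Set.subset_biUnion_of_mem (u := fun i => asSet1 (C i).1) hi₀)
      (hss i₀).1
  · rintro J₁ J₂ h1 h2 hJ1inf hJ2inf ⟨G, hGmem, hGex, hGuniq⟩
    set A := asSet1 J₁.1 with hA
    have hexdex : ∃ i ∈ S, (A ∩ asSet1 (C i).1).Infinite := by
      by_contra h
      push_neg at h
      have hfin : (⋃ i ∈ S, (A ∩ asSet1 (C i).1)).Finite :=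
        Set.Finite.biUnion S.finite_toSet fun i hi => h i hi
      refine hJ1inf (hfin.subset ?_)
      intro a ha
      have hm := h1 ha
      rw [Set.mem_iUnion₂] at hm ⊢
      obtain ⟨i, hiS, hci⟩ := hm
      exact ⟨i, hiS, ha, hci⟩
    obtain ⟨i, hiS, hAiInf⟩ := hexdex
    set f : Fin 1 → Fin 2 := fun _ => 0 with hf
    set g : Fin 1 → Fin 2 := fun _ => 1 with hg
    set J₁' : DefSet L M 1 := ⟨J₁.1 ∩ (C i).1, J₁.2.inter (C i).2⟩ with hJ₁'def
    have hJ₁'as : asSet1 J₁'.1 = A ∩ asSet1 (C i).1 := rfl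
    set G' : DefSet L M 2 :=
      ⟨G.1 ∩ (fun v : Fin 2 → M => v ∘ f) ⁻¹' J₁'.1, G.2.inter (J₁'.2.preimage_comp f)⟩
      with hG'def
    set J₂' : DefSet L M 1 := ⟨(fun w : Fin 2 → M => w ∘ g) '' G'.1, G'.2.image_comp g⟩
      with hJ₂'def
    have hvec : ∀ v : Fin 2 → M, (![v 0, v 1] : Fin 2 → M) = v := by
      intro v; funext j; fin_cases j <;> simp
    have hcompf : ∀ v : Fin 2 → M, v ∘ f = (fun _ : Fin 1 => v 0) := fun v => rfl
    have hmemG' : ∀ v : Fin 2 → M, v ∈ G'.1 ↔ v ∈ G.1 ∧ v 0 ∈ asSet1 J₁'.1 := by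
      intro v
      constructor
      · rintro ⟨hvG, hvp⟩
        refine ⟨hvG, ?_⟩
        rw [Set.mem_preimage, hcompf] at hvp
        exact hvp
      · rintro ⟨hvG, hv0⟩
        refine ⟨hvG, ?_⟩
        rw [Set.mem_preimage, hcompf]
        exact hv0
    have hB' : ∀ b : M, b ∈ asSet1 J₂'.1 ↔ ∃ v ∈ G'.1, v 1 = b := by
      intro b
      constructor
      · rintro ⟨v, hv, hveq⟩
        exact ⟨v, hv, congrFun hveq 0⟩
      · rintro ⟨v, hv, hvb⟩
        exact ⟨v, hv, funext fun j => hvb⟩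
    have hsub1 : asSet1 J₁'.1 ⊆ asSet1 (C i).1 := by
      rw [hJ₁'as]; exact Set.inter_subset_right
    have hsub2 : asSet1 J₂'.1 ⊆ (asSet1 (C i).1)ᶜ := by
      intro b hb
      obtain ⟨v, hv, rfl⟩ := (hB' b).1 hb
      have hv1 : v 1 ∈ asSet1 J₂.1 := (hGmem v ((hmemG' v).1 hv).1).2
      intro hc
      exact h2 hv1 (Set.mem_biUnion hiS hc)
    have hJ₁'inf : (asSet1 J₁'.1).Infinite := by rw [hJ₁'as]; exact hAiInf
    haveI : Nonempty M := ⟨hJ1inf.nonempty.choose⟩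
    -- the choice function
    set F : M → M := fun x => Classical.epsilon fun y => (![x, y] : Fin 2 → M) ∈ G.1 with hFdef
    have hFmem : ∀ x ∈ asSet1 J₁'.1, (![x, F x] : Fin 2 → M) ∈ G'.1 := by
      intro x hx
      have hxA : x ∈ A := (hJ₁'as ▸ hx).1
      have hexy := hGex x hxA
      have hFx : (![x, F x] : Fin 2 → M) ∈ G.1 := by
        simp only [hFdef]; exact Classical.epsilon_spec hexy.exists
      refine (hmemG' _).2 ⟨hFx, ?_⟩
      have h0 : (![x, F x] : Fin 2 → M) 0 = x := rfl
      rw [h0]; exact hx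
    have hFB : ∀ x ∈ asSet1 J₁'.1, F x ∈ asSet1 J₂'.1 := by
      intro x hx
      exact (hB' (F x)).2 ⟨![x, F x], hFmem x hx, rfl⟩
    have hinj : Set.InjOn F (asSet1 J₁'.1) := by
      intro x₁ h₁ x₂ h₂ heq
      have hyB : F x₁ ∈ asSet1 J₂.1 := (hGmem _ ((hmemG' _).1 (hFmem x₁ h₁)).1).2
      have huq := hGuniq (F x₁) hyB
      have e1 := huq.unique ((hmemG' _).1 (hFmem x₁ h₁)).1
        (by rw [heq]; exact ((hmemG' _).1 (hFmem x₂ h₂)).1)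
      exact e1
    have hJ₂'inf : (asSet1 J₂'.1).Infinite := by
      have himg : (F '' asSet1 J₁'.1).Infinite :=
        (Set.infinite_image_iff hinj).2 hJ₁'inf
      refine Set.Infinite.mono ?_ himg
      rintro b ⟨x, hx, rfl⟩
      exact hFB x hx
    refine (hss i).2 J₁' J₂' hsub1 hsub2 hJ₁'inf hJ₂'inf ⟨G', ?_, ?_, ?_⟩
    · intro v hv
      exact ⟨((hmemG' v).1 hv).2, (hB' (v 1)).2 ⟨v, hv, rfl⟩⟩
    · intro x hx
      obtain ⟨y, hy, hyu⟩ := hGex x (hJ₁'as ▸ hx).1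
      refine ⟨y, (hmemG' _).2 ⟨hy, ?_⟩, fun y' hy' => hyu y' ((hmemG' _).1 hy').1⟩
      have h0 : (![x, y] : Fin 2 → M) 0 = x := rfl
      rw [h0]; exact hx
    · intro y hy
      obtain ⟨v, hv, rfl⟩ := (hB' y).1 hy
      have hvG : v ∈ G.1 := ((hmemG' v).1 hv).1
      have hyB : v 1 ∈ asSet1 J₂.1 := (hGmem v hvG).2
      have huq := hGuniq (v 1) hyB
      refine ⟨v 0, ?_, fun x' hx' => ?_⟩
      · exact Set.mem_of_eq_of_mem (hvec v) hv
      · exact huq.unique ((hmemG' _).1 hx').1 (Set.mem_of_eq_of_mem (hvec v) hvG)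

end Aux

/-- If an o-minimal structure has a generating system `C_1, …, C_m` of
minimally self-sufficient sets, then `|𝔇(M)| = 2 ^ m - 1`: there are `2 ^ m - 1` pairwise
`∼_fin`-inequivalent self-sufficient definable sets such that every self-sufficient definable
set is `∼_fin`-equivalent to one of them. -/
theorem statement_19 (L : FirstOrder.Language.{v, w}) (M : Type u) [L.Structure M]
    [LinearOrder M] [DenselyOrdered M] [NoMinOrder M] [NoMaxOrder M]
    (hlt : LtDefinable L M) (hom : OMinimal L M)
    (m : ℕ) (C : Fin m → DefSet L M 1)
    (hmin : ∀ i, MinimallySelfSufficient L M (asSet1 (C i).1))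
    (hij : ∀ i j, i ≠ j → (asSet1 (C i).1 ∩ asSet1 (C j).1).Finite)
    (hcov : ((⋃ i, asSet1 (C i).1)ᶜ : Set M).Finite) :
    ∃ R : Fin (2 ^ m - 1) → DefSet L M 1,
      (∀ j, SelfSufficient L M (asSet1 (R j).1)) ∧
      (∀ j k, j ≠ k → ¬ FinSymmDiff (asSet1 (R j).1) (asSet1 (R k).1)) ∧
      (∀ I : DefSet L M 1, SelfSufficient L M (asSet1 I.1) →
        ∃ j, FinSymmDiff (asSet1 I.1) (asSet1 (R j).1)) := by
  classical
  have hcard : Fintype.card {S : Finset (Fin m) // S.Nonempty} = 2 ^ m - 1 := by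
    have h1 : Fintype.card {S : Finset (Fin m) // S.Nonempty}
        = Fintype.card {S : Finset (Fin m) // ¬ S = ∅} :=
      Fintype.card_congr (Equiv.subtypeEquivRight fun S => by
        simp [Finset.nonempty_iff_ne_empty])
    rw [h1, Fintype.card_subtype_compl, Fintype.card_subtype_eq, Fintype.card_finset,
      Fintype.card_fin]
  set e : Fin (2 ^ m - 1) ≃ {S : Finset (Fin m) // S.Nonempty} :=
    (Fintype.equivFinOfCardEq hcard).symm with he
  set Rset : Finset (Fin m) → DefSet L M 1 :=
    fun S => ⟨⋃ i ∈ S, (C i).1, definable_biUnion_finset (fun i => (C i).2) S⟩ with hRset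
  have hU : ∀ S : Finset (Fin m), asSet1 (Rset S).1 = ⋃ i ∈ S, asSet1 (C i).1 :=
    fun S => asSet1_biUnion C S
  refine ⟨fun j => Rset (e j).1, ?_, ?_, ?_⟩
  · intro j
    rw [hU]
    exact selfSufficient_biUnion C (fun i => (hmin i).1) (e j).1 (e j).2
  · -- pairwise inequivalence
    have key : ∀ S T : Finset (Fin m), ∀ i ∈ S, i ∉ T →
        ¬ FinSymmDiff (asSet1 (Rset S).1) (asSet1 (Rset T).1) := by
      intro S T i hiS hiT hfin
      have hint : (asSet1 (C i).1 ∩ asSet1 (Rset T).1).Finite := by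
        rw [hU]
        rw [Set.inter_iUnion₂]
        refine Set.Finite.biUnion T.finite_toSet fun j hj => ?_
        exact hij i j (fun h => hiT (h ▸ hj))
      have hinf : (asSet1 (C i).1 \ asSet1 (Rset T).1).Infinite := by
        have := ((hmin i).1.1).diff hint
        rwa [Set.diff_self_inter] at this
      refine hinf (hfin.subset ?_)
      intro a ha
      refine Set.mem_union_left _ ⟨?_, ha.2⟩
      rw [hU]
      exact Set.mem_biUnion hiS ha.1
    intro j k hjk hfin
    have hST : (e j).1 ≠ (e k).1 := fun h => hjk (e.injective (Subtype.ext h))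
    rcases Finset.not_subset.1 (fun h => hST (Finset.Subset.antisymm h (by
        by_contra hTk
        obtain ⟨i, hiT, hiS⟩ := Finset.not_subset.1 hTk
        exact key (e k).1 (e j).1 i hiT hiS (by
          unfold FinSymmDiff at hfin ⊢
          rwa [Set.union_comm] at hfin)))) with ⟨i, hiS, hiT⟩
    exact key (e j).1 (e k).1 i hiS hiT hfin
  · -- completeness
    intro I hI
    set A := asSet1 I.1 with hA
    set S : Finset (Fin m) := Finset.univ.filter fun i => (A ∩ asSet1 (C i).1).Infinite
      with hSdef
    have hSmem : ∀ i, i ∈ S ↔ (A ∩ asSet1 (C i).1).Infinite := by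
      intro i; simp [hSdef]
    have hSne : S.Nonempty := by
      rw [Finset.nonempty_iff_ne_empty]
      intro hSe
      have hallfin : ∀ i, (A ∩ asSet1 (C i).1).Finite := by
        intro i
        rw [← Set.not_infinite]
        intro hinf
        have hiS : i ∈ S := (hSmem i).2 hinf
        rw [hSe] at hiS
        exact absurd hiS (Finset.notMem_empty i)
      have hsub : A ⊆ ((⋃ i, asSet1 (C i).1)ᶜ) ∪ ⋃ i, (A ∩ asSet1 (C i).1) := by
        intro a ha
        by_cases h : a ∈ ⋃ i, asSet1 (C i).1
        · obtain ⟨i, hi⟩ := Set.mem_iUnion.1 h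
          exact Set.mem_union_right _ (Set.mem_iUnion.2 ⟨i, ha, hi⟩)
        · exact Set.mem_union_left _ h
      exact hI.1 ((hcov.union (Set.finite_iUnion hallfin)).subset hsub)
    refine ⟨e.symm ⟨S, hSne⟩, ?_⟩
    have heS : (e (e.symm ⟨S, hSne⟩)).1 = S := by rw [e.apply_symm_apply]
    show FinSymmDiff A (asSet1 (Rset (e (e.symm ⟨S, hSne⟩)).1).1)
    rw [heS]
    have hpart1 : (A \ asSet1 (Rset S).1).Finite := by
      have hsub : A \ asSet1 (Rset S).1 ⊆
          ((⋃ i, asSet1 (C i).1)ᶜ) ∪ ⋃ i ∈ Finset.univ \ S, (A ∩ asSet1 (C i).1) := by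
        rintro a ⟨ha, hna⟩
        by_cases h : a ∈ ⋃ i, asSet1 (C i).1
        · obtain ⟨i, hi⟩ := Set.mem_iUnion.1 h
          have hiS : i ∉ S := by
            intro hiS
            exact hna (by rw [hU]; exact Set.mem_biUnion hiS hi)
          refine Set.mem_union_right _ ?_
          rw [Set.mem_iUnion₂]
          exact ⟨i, Finset.mem_sdiff.2 ⟨Finset.mem_univ i, hiS⟩, ha, hi⟩
        · exact Set.mem_union_left _ h
      refine ((hcov.union ?_).subset hsub)
      refine Set.Finite.biUnion (Finset.univ \ S).finite_toSet fun i hi => ?_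
      have hiS : i ∉ S := (Finset.mem_sdiff.1 (by exact_mod_cast hi)).2
      exact Set.not_infinite.1 fun hinf => hiS ((hSmem i).2 hinf)
    have hpart2 : (asSet1 (Rset S).1 \ A).Finite := by
      rw [hU]
      have hsub : (⋃ i ∈ S, asSet1 (C i).1) \ A ⊆ ⋃ i ∈ S, (asSet1 (C i).1 \ A) := by
        rintro a ⟨ha, hna⟩
        rw [Set.mem_iUnion₂] at ha ⊢
        obtain ⟨i, hiS, hi⟩ := ha
        exact ⟨i, hiS, hi, hna⟩
      refine (Set.Finite.biUnion S.finite_toSet fun i hi => ?_).subset hsub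
      have hiInf : (A ∩ asSet1 (C i).1).Infinite := (hSmem i).1 hi
      rcases (hmin i).2 I hI with hcase | ⟨Fs, hFs, hsubF⟩
      · exact absurd (by rwa [Set.inter_comm] at hcase) hiInf
      · refine hFs.subset ?_
        rintro a ⟨ha, hna⟩
        rcases hsubF ha with h | h
        · exact absurd h hna
        · exact h
    exact hpart1.union hpart2

end PaperDim
end
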